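/- arXiv:0907.5339 — 3 statements merged into one kernel-verified Lean document; each statement's English description precedes it below -/
import Mathlib

section
/- Let p : E → B be a covering of small categories, b an object of B, and e ∈ p⁻¹(b). Then the induced group homomorphism p_* : π₁(E,e) → π₁(B,b) is injective. -/
open CategoryTheory

universe v u v' u' w

namespace Paper

variable (C : Type u) [Category.{v} C]

/-- The groupoidification `π(C)` of `C`: the localization of `C` at all of its morphisms,
whose morphisms are equivalence classes of zigzags of morphisms of `C`. -/
abbrev piCat := (⊤ : MorphismProperty C).Localization

/-- The canonical functor `C ⥤ π(C)` (the identity on objects). -/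
abbrev piQ : C ⥤ piCat C := (⊤ : MorphismProperty C).Q

lemma piQ_isIso {x y : C} (f : x ⟶ y) : IsIso ((piQ C).map f) :=
  MorphismProperty.Q_inverts ⊤ f trivial

/-- `π₀(C)`: the set of objects of `C` modulo the equivalence relation generated by
`a ∼ b` whenever there is a morphism `a ⟶ b`. -/
abbrev pi0 := ConnectedComponents C

/-- The fundamental group `π₁(C, x) = Hom_{π(C)}(x, x)` (the group of automorphisms of `x`
in the groupoidification of `C`; every morphism of `π(C)` is invertible). -/
abbrev pi1 (x : C) := Aut ((piQ C).obj x)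

variable {C} {D : Type u'} [Category.{v'} D]

/-- The functor `π(C) ⥤ π(D)` induced by `F : C ⥤ D`. -/
noncomputable def piMap (F : C ⥤ D) : piCat C ⥤ piCat D :=
  Localization.Construction.lift (F ⋙ piQ D)
    (fun _ _ f _ => MorphismProperty.Q_inverts ⊤ (F.map f) trivial)

/-- The homomorphism `π₁(C, x) →* π₁(D, F(x))` induced by `F : C ⥤ D`. -/
noncomputable def pi1Map (F : C ⥤ D) (x : C) : pi1 C x →* pi1 D (F.obj x) :=
  (piMap F).mapAut ((piQ C).obj x)

/-- Transport of fundamental groups along an equality of base points. -/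
noncomputable def pi1Cast {x y : C} (h : x = y) : pi1 C x ≃* pi1 C y := by subst h; exact MulEquiv.refl _

/-- A functor `F : C ⥤ D` is a weak 1-equivalence if the induced maps
`π₀(C) → π₀(D)` and `π₁(C, x) → π₁(D, F(x))` (for every object `x`) are bijections. -/
structure IsWeak1Equiv (F : C ⥤ D) : Prop where
  bij0 : Function.Bijective F.mapConnectedComponents
  bij1 : ∀ x : C, Function.Bijective (pi1Map F x)

end Paper
namespace Paper

/-- The terminal category `∗`. -/
abbrev Pt := Discrete PUnit.{1}

/-- The inclusion `∗ → [1]` picking the object `0`. -/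
def pick0 : Pt ⥤ Fin 2 := (Functor.const Pt).obj 0
/-- The inclusion `∗ → [1]` picking the object `1`. -/
def pick1 : Pt ⥤ Fin 2 := (Functor.const Pt).obj 1
/-- The inclusion `∗ → [1]ᵒᵖ` picking the object `0`. -/
def pick0op : Pt ⥤ (Fin 2)ᵒᵖ := (Functor.const Pt).obj (Opposite.op 0)

/-- Right lifting property of `p` against `u`, for strictly commuting squares of functors. -/
def FunctorRLP {A : Type*} {X : Type*} {E : Type*} {B : Type*}
    [Category A] [Category X] [Category E] [Category B]
    (u : A ⥤ X) (p : E ⥤ B) : Prop :=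
  ∀ (F : A ⥤ E) (G : X ⥤ B), F ⋙ p = u ⋙ G → ∃ H : X ⥤ E, u ⋙ H = F ∧ H ⋙ p = G

/-- Unique right lifting property of `p` against `u`. -/
def FunctorURLP {A : Type*} {X : Type*} {E : Type*} {B : Type*}
    [Category A] [Category X] [Category E] [Category B]
    (u : A ⥤ X) (p : E ⥤ B) : Prop :=
  ∀ (F : A ⥤ E) (G : X ⥤ B), F ⋙ p = u ⋙ G → ∃! H : X ⥤ E, u ⋙ H = F ∧ H ⋙ p = G

/-- A functor is a covering iff it has the unique right lifting property with
respect to the two inclusions `∗ → [1]` picking `0` and `1`. -/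
def IsCovering {E : Type*} {B : Type*} [Category E] [Category B] (p : E ⥤ B) : Prop :=
  FunctorURLP pick0 p ∧ FunctorURLP pick1 p

/-- The category `I₂ : 1 ← 0 → 2`. -/
inductive I2 : Type
  | z | a | b

instance : PartialOrder I2 where
  le x y := x = y ∨ x = I2.z
  le_refl x := Or.inl rfl
  le_trans x y z hxy hyz := hxy.elim (fun h => h ▸ hyz) fun h => Or.inr h
  le_antisymm x y hxy hyx := by
    rcases hxy with h | h
    · exact h
    · rcases hyx with h' | h'
      · exact h'.symm
      · rw [h, h']

/-- The identity-on-objects functor `I₂ ⥤ [2]`. -/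
def i2Incl : I2 ⥤ Fin 3 :=
  Monotone.functor (f := fun x => match x with | I2.z => 0 | I2.a => 1 | I2.b => 2)
    (by rintro x y (rfl | rfl)
        · exact le_refl _
        · cases y <;> simp)

/-- The objects of the category `CS¹ : 0 → 1 ⇉ 2` (with `0` initial). -/
inductive CS1 : Type
  | x0 | x1 | x2

/-- The morphisms of `CS¹`. -/
inductive CS1.Hom : CS1 → CS1 → Type
  | id (x : CS1) : CS1.Hom x x
  | a : CS1.Hom CS1.x0 CS1.x1
  | c : CS1.Hom CS1.x0 CS1.x2
  | f : CS1.Hom CS1.x1 CS1.x2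
  | g : CS1.Hom CS1.x1 CS1.x2

/-- Composition in `CS¹`. -/
def CS1.comp : ∀ {x y z : CS1}, CS1.Hom x y → CS1.Hom y z → CS1.Hom x z
  | _, _, _, .id _, h => h
  | _, _, _, .a, .id _ => .a
  | _, _, _, .a, .f => .c
  | _, _, _, .a, .g => .c
  | _, _, _, .c, .id _ => .c
  | _, _, _, .f, .id _ => .f
  | _, _, _, .g, .id _ => .g

instance : Category CS1 where
  Hom := CS1.Hom
  id := CS1.Hom.id
  comp := CS1.comp
  id_comp _ := rfl
  comp_id u := by cases u <;> rfl
  assoc u v w := by cases u <;> cases v <;> cases w <;> rfl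

/-- The identity-on-objects functor `CS¹ ⥤ [2]`. -/
def cs1Incl : CS1 ⥤ Fin 3 where
  obj x := match x with | CS1.x0 => 0 | CS1.x1 => 1 | CS1.x2 => 2
  map {x y} u := match u with
    | .id _ => 𝟙 _
    | .a => homOfLE (by decide)
    | .c => homOfLE (by decide)
    | .f => homOfLE (by decide)
    | .g => homOfLE (by decide)
  map_id _ := rfl
  map_comp _ _ := Subsingleton.elim _ _

/-- A functor is a fibration of the 1-type model structure iff it has the right
lifting property with respect to the six members of the set `J`:
`∗ → [1]`, `∗ → [1]ᵒᵖ`, `I₂ → [2]`, `I₂ᵒᵖ → [2]ᵒᵖ`, `CS¹ → [2]`, `(CS¹)ᵒᵖ → [2]ᵒᵖ`. -/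
def Is1Fibration {E : Type*} {B : Type*} [Category E] [Category B] (p : E ⥤ B) : Prop :=
  FunctorRLP pick0 p ∧ FunctorRLP pick0op p ∧
  FunctorRLP i2Incl p ∧ FunctorRLP i2Incl.op p ∧
  FunctorRLP cs1Incl p ∧ FunctorRLP cs1Incl.op p

end Paper

namespace Paper


section Aux

variable {E : Type u} {B : Type u'} [Category.{v} E] [Category.{v'} B] {p : E ⥤ B}

lemma pt_ext {X : Type*} [Category X] (F G : Pt ⥤ X) (h : F.obj ⟨⟨⟩⟩ = G.obj ⟨⟨⟩⟩) : F = G := by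
  refine CategoryTheory.Functor.ext ?_ ?_
  · rintro ⟨⟨⟩⟩; exact h
  · rintro ⟨⟨⟩⟩ ⟨⟨⟩⟩ f
    have : f = 𝟙 _ := Subsingleton.elim _ _
    subst this; simp

/-- The unique nonidentity arrow of `[1]`. -/
def h01 : (0 : Fin 2) ⟶ 1 := homOfLE (by decide)

lemma mk₁_map_h01 {x y : E} (f : x ⟶ y) : (ComposableArrows.mk₁ f).map h01 = f := rfl

lemma sigma_hom_ext {X : Type*} [Category X] {x : X} {c c' : X} (h : c = c')
    {f : x ⟶ c} {f' : x ⟶ c'} (hf : f ≫ eqToHom h = f') :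
    (⟨c, f⟩ : Σ z, (x ⟶ z)) = ⟨c', f'⟩ := by
  subst h; simp at hf; rw [hf]

lemma sigma_hom_ext' {X : Type*} [Category X] {x : X} {c c' : X} (h : c = c')
    {f : c ⟶ x} {f' : c' ⟶ x} (hf : eqToHom h.symm ≫ f = f') :
    (⟨c, f⟩ : Σ z, (z ⟶ x)) = ⟨c', f'⟩ := by
  subst h; simp at hf; rw [hf]

lemma sigma_hom_out {X : Type*} [Category X] {x : X} {w w' : Σ z, (x ⟶ z)} (h : w = w') :
    ∃ h1 : w.1 = w'.1, w.2 ≫ eqToHom h1 = w'.2 := by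
  subst h; exact ⟨rfl, by simp⟩

lemma sigma_hom_out' {X : Type*} [Category X] {x : X} {w w' : Σ z, (z ⟶ x)} (h : w = w') :
    ∃ h1 : w.1 = w'.1, eqToHom h1.symm ≫ w.2 = w'.2 := by
  subst h; exact ⟨rfl, by simp⟩

lemma covering_lift_src (hp : IsCovering p) (e : E) {b' : B} (g : p.obj e ⟶ b') :
    ∃! w : Σ e' : E, (e ⟶ e'),
      (⟨p.obj w.1, p.map w.2⟩ : Σ c : B, (p.obj e ⟶ c)) = ⟨b', g⟩ := by
  obtain ⟨H, ⟨h1, h2⟩, huniq⟩ := hp.1 ((Functor.const Pt).obj e) (ComposableArrows.mk₁ g)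
    (pt_ext _ _ rfl)
  have h0 : H.obj 0 = e := Functor.congr_obj h1 ⟨⟨⟩⟩
  have e1 : p.obj (H.obj 1) = b' := Functor.congr_obj h2 1
  have hm := Functor.congr_hom h2 h01
  simp only [Functor.comp_map, mk₁_map_h01] at hm
  refine ⟨⟨H.obj 1, eqToHom h0.symm ≫ H.map h01⟩, ?_, ?_⟩
  · refine sigma_hom_ext e1 ?_
    rw [Functor.map_comp, hm]
    simp [eqToHom_map]
    erw [Category.assoc, eqToHom_trans, eqToHom_refl, eqToHom_refl, Category.id_comp, Category.comp_id]
  · rintro ⟨y, u⟩ hw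
    have hy : p.obj y = b' := congrArg Sigma.fst hw
    have hu : p.map u ≫ eqToHom hy = g := by
      subst hy; simpa using hw
    have hH : ComposableArrows.mk₁ u = H := by
      apply huniq
      refine ⟨pt_ext _ _ rfl, ?_⟩
      refine ComposableArrows.ext₁ rfl hy ?_
      show p.map ((ComposableArrows.mk₁ u).map h01) = _
      rw [mk₁_map_h01, ← hu]
      simp
      erw [Category.assoc, eqToHom_trans, eqToHom_refl, eqToHom_refl, Category.id_comp, Category.comp_id]
      rfl
    have hy1 : y = H.obj 1 := Functor.congr_obj hH 1
    have hmu := Functor.congr_hom hH h01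
    rw [mk₁_map_h01] at hmu
    refine sigma_hom_ext hy1 ?_
    rw [hmu]
    simp [eqToHom_trans]
    erw [Category.assoc, Category.assoc, eqToHom_trans, eqToHom_refl, Category.comp_id]
    rfl

lemma covering_lift_tgt (hp : IsCovering p) (e' : E) {b : B} (g : b ⟶ p.obj e') :
    ∃! w : Σ e₀ : E, (e₀ ⟶ e'),
      (⟨p.obj w.1, p.map w.2⟩ : Σ c : B, (c ⟶ p.obj e')) = ⟨b, g⟩ := by
  obtain ⟨H, ⟨h1, h2⟩, huniq⟩ := hp.2 ((Functor.const Pt).obj e') (ComposableArrows.mk₁ g)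
    (pt_ext _ _ rfl)
  have h0 : H.obj 1 = e' := Functor.congr_obj h1 ⟨⟨⟩⟩
  have e1 : p.obj (H.obj 0) = b := Functor.congr_obj h2 0
  have hm := Functor.congr_hom h2 h01
  simp only [Functor.comp_map, mk₁_map_h01] at hm
  refine ⟨⟨H.obj 0, H.map h01 ≫ eqToHom h0⟩, ?_, ?_⟩
  · refine sigma_hom_ext' e1 ?_
    rw [Functor.map_comp, hm]
    simp [eqToHom_map]
    erw [Category.assoc, eqToHom_trans, eqToHom_refl, eqToHom_refl, Category.id_comp, Category.comp_id]
  · rintro ⟨y, u⟩ hw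
    have hy : p.obj y = b := congrArg Sigma.fst hw
    have hu : eqToHom hy.symm ≫ p.map u = g := by
      subst hy; simpa using hw
    have hH : ComposableArrows.mk₁ u = H := by
      apply huniq
      refine ⟨pt_ext _ _ rfl, ?_⟩
      refine ComposableArrows.ext₁ hy rfl ?_
      show p.map ((ComposableArrows.mk₁ u).map h01) = _
      rw [mk₁_map_h01, ← hu]
      simp
      erw [← Category.assoc, ← Category.assoc, eqToHom_trans, eqToHom_refl, eqToHom_refl, Category.id_comp, Category.comp_id]
      rfl
    have hy1 : y = H.obj 0 := Functor.congr_obj hH 0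
    have hmu := Functor.congr_hom hH h01
    rw [mk₁_map_h01] at hmu
    refine sigma_hom_ext' hy1 ?_
    rw [hmu]
    simp [eqToHom_trans]
    erw [← Category.assoc, eqToHom_trans, eqToHom_refl, Category.id_comp]
    rfl

variable (hp : IsCovering p)

/-- The unique lift with prescribed source. -/
noncomputable def fwd (e' : E) {c' : B} (g : p.obj e' ⟶ c') : Σ x : E, (e' ⟶ x) :=
  (covering_lift_src hp e' g).exists.choose

lemma fwd_spec (e' : E) {c' : B} (g : p.obj e' ⟶ c') :
    (⟨p.obj (fwd hp e' g).1, p.map (fwd hp e' g).2⟩ : Σ c : B, (p.obj e' ⟶ c)) = ⟨c', g⟩ :=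
  (covering_lift_src hp e' g).exists.choose_spec

lemma fwd_uniq (e' : E) {c' : B} (g : p.obj e' ⟶ c') (w : Σ x : E, (e' ⟶ x))
    (hw : (⟨p.obj w.1, p.map w.2⟩ : Σ c : B, (p.obj e' ⟶ c)) = ⟨c', g⟩) : w = fwd hp e' g := by
  obtain ⟨w', _, h2⟩ := covering_lift_src hp e' g
  rw [h2 w hw, h2 _ (fwd_spec hp e' g)]

lemma fwd_obj (e' : E) {c' : B} (g : p.obj e' ⟶ c') : p.obj (fwd hp e' g).1 = c' :=
  congrArg Sigma.fst (fwd_spec hp e' g)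

lemma fwd_map (e' : E) {c' : B} (g : p.obj e' ⟶ c') :
    p.map (fwd hp e' g).2 ≫ eqToHom (fwd_obj hp e' g) = g := by
  obtain ⟨h1, h2⟩ := sigma_hom_out (fwd_spec hp e' g)
  exact h2

/-- The unique lift with prescribed target. -/
noncomputable def bwd (e' : E) {c : B} (g : c ⟶ p.obj e') : Σ x : E, (x ⟶ e') :=
  (covering_lift_tgt hp e' g).exists.choose

lemma bwd_spec (e' : E) {c : B} (g : c ⟶ p.obj e') :
    (⟨p.obj (bwd hp e' g).1, p.map (bwd hp e' g).2⟩ : Σ c₀ : B, (c₀ ⟶ p.obj e')) = ⟨c, g⟩ :=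
  (covering_lift_tgt hp e' g).exists.choose_spec

lemma bwd_uniq (e' : E) {c : B} (g : c ⟶ p.obj e') (w : Σ x : E, (x ⟶ e'))
    (hw : (⟨p.obj w.1, p.map w.2⟩ : Σ c₀ : B, (c₀ ⟶ p.obj e')) = ⟨c, g⟩) : w = bwd hp e' g := by
  obtain ⟨w', _, h2⟩ := covering_lift_tgt hp e' g
  rw [h2 w hw, h2 _ (bwd_spec hp e' g)]

lemma bwd_obj (e' : E) {c : B} (g : c ⟶ p.obj e') : p.obj (bwd hp e' g).1 = c :=
  congrArg Sigma.fst (bwd_spec hp e' g)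

lemma bwd_map (e' : E) {c : B} (g : c ⟶ p.obj e') :
    eqToHom (bwd_obj hp e' g).symm ≫ p.map (bwd hp e' g).2 = g := by
  obtain ⟨h1, h2⟩ := sigma_hom_out' (bwd_spec hp e' g)
  exact h2

variable (e : E)

/-- Ext lemma for the fibers of the fiber-transport functor. -/
lemma K_ext {c : B} {x x' : E} {hx : p.obj x = c} {hx' : p.obj x' = c}
    {γ : (piQ E).obj e ⟶ (piQ E).obj x} {γ' : (piQ E).obj e ⟶ (piQ E).obj x'}
    (h1 : x = x') (h2 : γ ≫ eqToHom (congrArg (piQ E).obj h1) = γ') :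
    (⟨x, hx, γ⟩ : Σ' (z : E) (_ : p.obj z = c), ((piQ E).obj e ⟶ (piQ E).obj z)) =
      ⟨x', hx', γ'⟩ := by
  subst h1
  simp at h2
  rw [h2]

/-- The fiber-transport functor `K : B ⥤ Type`, sending `c` to the set of pairs of a point
`x` of the fiber over `c` together with a morphism `e ⟶ x` in `π(E)`. -/
noncomputable def K : B ⥤ Type (max u v) where
  obj c := Σ' (x : E) (_ : p.obj x = c), ((piQ E).obj e ⟶ (piQ E).obj x)
  map {c c'} g := ↾fun t =>
    ⟨(fwd hp t.1 (eqToHom t.2.1 ≫ g)).1, fwd_obj hp _ _,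
      t.2.2 ≫ (piQ E).map (fwd hp t.1 (eqToHom t.2.1 ≫ g)).2⟩
  map_id c := by
    refine ConcreteCategory.ext_apply fun t => ?_
    obtain ⟨x, hx, γ⟩ := t
    dsimp only [types_comp_apply, types_id_apply, TypeCat.ofHom_apply]
    have hF : (⟨x, 𝟙 x⟩ : Σ z : E, (x ⟶ z)) = fwd hp x (eqToHom hx ≫ 𝟙 c) := by
      apply fwd_uniq
      refine sigma_hom_ext hx ?_
      simp
    obtain ⟨h1, h2⟩ := sigma_hom_out hF.symm
    refine K_ext e h1 ?_
    rw [Category.assoc, ← eqToHom_map (piQ E) h1, ← Functor.map_comp, h2]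
    simp
  map_comp {c c' c''} g g' := by
    refine ConcreteCategory.ext_apply fun t => ?_
    obtain ⟨x, hx, γ⟩ := t
    dsimp only [types_comp_apply, types_id_apply, TypeCat.ofHom_apply]
    have hG : (⟨(fwd hp (fwd hp x (eqToHom hx ≫ g)).1
          (eqToHom (fwd_obj hp _ _) ≫ g')).1,
        (fwd hp x (eqToHom hx ≫ g)).2 ≫ (fwd hp (fwd hp x (eqToHom hx ≫ g)).1
          (eqToHom (fwd_obj hp _ _) ≫ g')).2⟩ : Σ z : E, (x ⟶ z)) =
        fwd hp x (eqToHom hx ≫ g ≫ g') := by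
      apply fwd_uniq
      refine sigma_hom_ext (fwd_obj hp _ _) ?_
      rw [Functor.map_comp, Category.assoc, fwd_map hp _ _, ← Category.assoc, fwd_map hp _ _]
      simp
    obtain ⟨h1, h2⟩ := sigma_hom_out hG.symm
    refine K_ext e h1 ?_
    rw [Category.assoc, ← eqToHom_map (piQ E) h1, ← Functor.map_comp, h2]
    simp

lemma K_map_apply {c c' : B} (g : c ⟶ c') (t : (K hp e).obj c) :
    (K hp e).map g t = (⟨(fwd hp t.1 (eqToHom t.2.1 ≫ g)).1, fwd_obj hp _ _,
      t.2.2 ≫ (piQ E).map (fwd hp t.1 (eqToHom t.2.1 ≫ g)).2⟩ : (K hp e).obj c') := rfl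

lemma K_map_apply' {c c' : B} (g : c ⟶ c') (x : E) (hx : p.obj x = c)
    (γ : (piQ E).obj e ⟶ (piQ E).obj x) :
    (K hp e).map g ⟨x, hx, γ⟩ = (⟨(fwd hp x (eqToHom hx ≫ g)).1, fwd_obj hp _ _,
      γ ≫ (piQ E).map (fwd hp x (eqToHom hx ≫ g)).2⟩ : (K hp e).obj c') := rfl

/-- The candidate inverse of `K.map g`. -/
noncomputable def Kinv {c c' : B} (g : c ⟶ c') : (K hp e).obj c' → (K hp e).obj c := fun t =>
  letI := piQ_isIso E (bwd hp t.1 (g ≫ eqToHom t.2.1.symm)).2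
  ⟨(bwd hp t.1 (g ≫ eqToHom t.2.1.symm)).1, bwd_obj hp _ _,
    t.2.2 ≫ inv ((piQ E).map (bwd hp t.1 (g ≫ eqToHom t.2.1.symm)).2)⟩

lemma K_left_inv {c c' : B} (g : c ⟶ c') :
    Function.LeftInverse (Kinv hp e g) ((K hp e).map g) := by
  rintro ⟨x, hx, γ⟩
  dsimp [K_map_apply', Kinv]
  have hV : (⟨x, (fwd hp x (eqToHom hx ≫ g)).2⟩ :
        Σ z : E, (z ⟶ (fwd hp x (eqToHom hx ≫ g)).1)) =
      bwd hp (fwd hp x (eqToHom hx ≫ g)).1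
        (g ≫ eqToHom (fwd_obj hp x (eqToHom hx ≫ g)).symm) := by
    apply bwd_uniq
    refine sigma_hom_ext' hx ?_
    rw [← cancel_mono (eqToHom (fwd_obj hp x (eqToHom hx ≫ g)))]
    rw [Category.assoc, Category.assoc, fwd_map hp x _]
    simp
  obtain ⟨h1, h2⟩ := sigma_hom_out' hV.symm
  refine K_ext e h1 ?_
  haveI := piQ_isIso E (bwd hp (fwd hp x (eqToHom hx ≫ g)).1
    (g ≫ eqToHom (fwd_obj hp x (eqToHom hx ≫ g)).symm)).2
  have hq : (piQ E).map (fwd hp x (eqToHom hx ≫ g)).2 =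
      eqToHom (congrArg (piQ E).obj h1).symm ≫
        (piQ E).map (bwd hp (fwd hp x (eqToHom hx ≫ g)).1
          (g ≫ eqToHom (fwd_obj hp x (eqToHom hx ≫ g)).symm)).2 := by
    rw [← h2]
    simp [eqToHom_map]
  rw [Category.assoc, Category.assoc, hq]
  simp

lemma K_right_inv {c c' : B} (g : c ⟶ c') :
    Function.RightInverse (Kinv hp e g) ((K hp e).map g) := by
  rintro ⟨x', hx', γ'⟩
  dsimp [K_map_apply, Kinv]
  have hF : (⟨x', (bwd hp x' (g ≫ eqToHom hx'.symm)).2⟩ :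
        Σ z : E, ((bwd hp x' (g ≫ eqToHom hx'.symm)).1 ⟶ z)) =
      fwd hp (bwd hp x' (g ≫ eqToHom hx'.symm)).1
        (eqToHom (bwd_obj hp x' (g ≫ eqToHom hx'.symm)) ≫ g) := by
    apply fwd_uniq
    refine sigma_hom_ext hx' ?_
    rw [← cancel_epi (eqToHom (bwd_obj hp x' (g ≫ eqToHom hx'.symm)).symm)]
    rw [← Category.assoc, bwd_map hp x' _]
    simp
  obtain ⟨h1, h2⟩ := sigma_hom_out hF.symm
  refine K_ext e h1 ?_
  haveI := piQ_isIso E (bwd hp x' (g ≫ eqToHom hx'.symm)).2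
  have hq : (piQ E).map (fwd hp (bwd hp x' (g ≫ eqToHom hx'.symm)).1
        (eqToHom (bwd_obj hp x' (g ≫ eqToHom hx'.symm)) ≫ g)).2 ≫
      eqToHom (congrArg (piQ E).obj h1) = (piQ E).map (bwd hp x' (g ≫ eqToHom hx'.symm)).2 := by
    rw [← eqToHom_map (piQ E) h1, ← Functor.map_comp, h2]
  rw [Category.assoc, Category.assoc, hq]
  simp

lemma K_inverts : (⊤ : MorphismProperty B).IsInvertedBy (K hp e) := by
  intro c c' g _
  rw [CategoryTheory.isIso_iff_bijective]
  exact Function.bijective_iff_has_inverse.mpr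
    ⟨Kinv hp e g, K_left_inv hp e g, K_right_inv hp e g⟩

/-- The factorization of `K` through `π(B)`. -/
noncomputable def Kbar : piCat B ⥤ Type (max u v) :=
  Localization.Construction.lift (K hp e) (K_inverts hp e)

lemma Kbar_map {c c' : B} (g : c ⟶ c') :
    (Kbar hp e).map ((piQ B).map g) = (K hp e).map g := by
  have := Functor.congr_hom (Localization.Construction.fac (K hp e) (K_inverts hp e)) g
  simp at this
  erw [this, eqToHom_refl, eqToHom_refl, Category.id_comp, Category.comp_id]

lemma piMap_map {x y : E} (f : x ⟶ y) :
    (piMap p).map ((piQ E).map f) = (piQ B).map (p.map f) := by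
  have := Functor.congr_hom (Localization.Construction.fac (W := (⊤ : MorphismProperty E))
    (p ⋙ piQ B) (fun _ _ f _ => MorphismProperty.Q_inverts ⊤ (p.map f) trivial)) f
  simp [piMap] at this
  erw [this, eqToHom_refl, eqToHom_refl, Category.id_comp, Category.comp_id]

/-- The canonical element of the fiber-transport set over a morphism in `π(E)`. -/
noncomputable def beta (X : piCat E) (δ : (piQ E).obj e ⟶ X) :
    ((piMap p) ⋙ Kbar hp e).obj X :=
  ⟨X.as.obj, rfl, δ⟩

lemma key : ∀ {X Y : piCat E} (γ : X ⟶ Y) (δ : (piQ E).obj e ⟶ X),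
    ((piMap p) ⋙ Kbar hp e).map γ (beta hp e X δ) = beta hp e Y (δ ≫ γ) := by
  let T := (piMap p) ⋙ Kbar hp e
  let P : MorphismProperty (piCat E) := fun X Y γ =>
    ∀ δ : (piQ E).obj e ⟶ X, T.map γ (beta hp e X δ) = beta hp e Y (δ ≫ γ)
  haveI : P.IsStableUnderComposition := by
    constructor
    intro X Y Z γ γ' hγ hγ' δ
    show T.map (γ ≫ γ') _ = _
    rw [Functor.map_comp]
    have : (T.map γ ≫ T.map γ') (beta hp e X δ) = T.map γ' (T.map γ (beta hp e X δ)) := rfl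
    rw [this, hγ δ, hγ' (δ ≫ γ), Category.assoc]
  have htop : P = ⊤ := by
    apply Localization.Construction.morphismProperty_eq_top'
    · intro x y f δ
      show (Kbar hp e).map ((piMap p).map ((piQ E).map f)) _ = _
      erw [piMap_map, Kbar_map]
      have hF : (⟨y, f⟩ : Σ z : E, (x ⟶ z)) = fwd hp x (𝟙 (p.obj x) ≫ p.map f) := by
        apply fwd_uniq
        refine sigma_hom_ext rfl ?_
        simp
      show ((K hp e).map (p.map f)) ⟨x, rfl, δ⟩ = (⟨y, rfl, δ ≫ (piQ E).map f⟩ :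
        Σ' (z : E) (_ : p.obj z = p.obj y), ((piQ E).obj e ⟶ (piQ E).obj z))
      dsimp [K_map_apply']
      obtain ⟨h1, h2⟩ := sigma_hom_out hF.symm
      refine K_ext e h1 ?_
      rw [Category.assoc, ← eqToHom_map (piQ E) h1, ← Functor.map_comp, h2]
    · intro X Y ε hε δ
      have h1 := hε (δ ≫ ε.inv)
      rw [Category.assoc, ε.inv_hom_id, Category.comp_id] at h1
      rw [← h1]
      have : T.map ε.hom ≫ T.map ε.inv = 𝟙 _ := by
        rw [← Functor.map_comp, ε.hom_inv_id]; simp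
      show (T.map ε.hom ≫ T.map ε.inv) (beta hp e X (δ ≫ ε.inv)) = _
      rw [this]
      rfl
  intro X Y γ δ
  have : P γ := htop ▸ (MorphismProperty.top_apply γ)
  exact this δ

include hp in
lemma piMap_inj_on_pi1 (γ γ' : (piQ E).obj e ⟶ (piQ E).obj e)
    (h : (piMap p).map γ = (piMap p).map γ') : γ = γ' := by
  have h1 := key hp e γ (𝟙 _)
  have h2 := key hp e γ' (𝟙 _)
  rw [Category.id_comp] at h1 h2
  have hb : beta hp e ((piQ E).obj e) γ = beta hp e ((piQ E).obj e) γ' := by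
    rw [← h1, ← h2]
    show (Kbar hp e).map ((piMap p).map γ) _ = (Kbar hp e).map ((piMap p).map γ') _
    rw [h]
  have h3 : ∀ (t t' : Σ' (z : E) (_ : p.obj z = p.obj e), ((piQ E).obj e ⟶ (piQ E).obj z)),
      t = t' → ∀ (hz : t.1 = t'.1), t.2.2 ≫ eqToHom (congrArg (piQ E).obj hz) = t'.2.2 := by
    rintro t t' rfl hz
    simp
  have h4 := h3 _ _ hb rfl
  simp [beta] at h4
  erw [eqToHom_refl, Category.comp_id] at h4
  exact h4

end Aux

/-- **Statement 10.** If `p : E ⥤ B` is a covering of small categories, `b` an object of `B`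
and `e ∈ p⁻¹(b)`, then the induced homomorphism `p₊ : π₁(E, e) →* π₁(B, b)` is injective. -/
theorem covering_pi1_injective
    (E : Type u) (B : Type u') [Category.{v} E] [Category.{v'} B]
    (p : E ⥤ B) (hp : IsCovering p) (b : B) (e : E) (he : p.obj e = b) :
    Function.Injective ((pi1Cast he).toMonoidHom.comp (pi1Map p e)) := by
  intro g g' h
  have h0 : pi1Map p e g = pi1Map p e g' := (pi1Cast he).injective (by simpa using h)
  have hm : (piMap p).map g.hom = (piMap p).map g'.hom := congrArg Iso.hom h0
  exact Iso.ext (piMap_inj_on_pi1 hp e g.hom g'.hom hm)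

end Paper
end

section
/- Let C and E be path connected pointed small categories and q : E → C a covering that preserves the base point. Then there exists a unique base-point-preserving functor α : Ĉ → E with q ∘ α = T, where T : Ĉ → C is the universal cover of C. -/
open CategoryTheory

universe v u v' u' w

namespace Paper

variable (C : Type u) [Category.{v} C]

/-- The functor `Hom_{π(C)}(∗, −) : C ⥤ Type`. -/
noncomputable def homFromBase (x : C) : C ⥤ Type (max u v) :=
  piQ C ⋙ coyoneda.obj (Opposite.op ((piQ C).obj x))

/-- The category `Ĉ`: the Grothendieck construction (category of elements) of
`Hom_{π(C)}(∗, −) : C ⥤ Type`. -/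
noncomputable def Chat (x : C) := (homFromBase C x).Elements

noncomputable instance (x : C) : Category (Chat C x) := by unfold Chat; infer_instance

/-- The projection `T : Ĉ ⥤ C`, `(c, w) ↦ c`. -/
noncomputable def chatT (x : C) : Chat C x ⥤ C := CategoryOfElements.π _

/-- The base point `(∗, id)` of `Ĉ`. -/
noncomputable def chatPt (x : C) : Chat C x := ⟨x, 𝟙 ((piQ C).obj x)⟩

end Paper

namespace Paper

section Covering

variable {E : Type*} {C : Type*} [Category E] [Category C] {q : E ⥤ C}

lemma fin2_ext {D : Type*} [Category D] {H₁ H₂ : Fin 2 ⥤ D}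
    (h0 : H₁.obj 0 = H₂.obj 0) (h1 : H₁.obj 1 = H₂.obj 1)
    (hmap : H₁.map (homOfLE (by decide : (0 : Fin 2) ≤ 1)) =
      eqToHom h0 ≫ H₂.map (homOfLE (by decide)) ≫ eqToHom h1.symm) : H₁ = H₂ := by
  refine CategoryTheory.Functor.ext ?_ ?_
  · intro i
    rcases i with ⟨(_|(_|i)), hi⟩
    · exact h0
    · exact h1
    · omega
  · intro i j f
    rcases i with ⟨(_|(_|i)), hi⟩ <;> rcases j with ⟨(_|(_|j)), hj⟩ <;> try omega
    · have : f = 𝟙 (⟨0, hi⟩ : Fin 2) := Subsingleton.elim _ _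
      subst this; simp
    · have : f = homOfLE (Fin.mk_le_mk.mpr (by omega)) := Subsingleton.elim _ _
      subst this
      convert hmap using 2
    · exact absurd (Fin.mk_le_mk.mp (leOfHom f)) (by omega)
    · have : f = 𝟙 (⟨1, hj⟩ : Fin 2) := Subsingleton.elim _ _
      subst this; simp

lemma lift0_existsUnique (hq : FunctorURLP pick0 q) (e : E) {c : C} (f : q.obj e ⟶ c) :
    ∃! z : Σ e' : E, (e ⟶ e'), ∃ h : q.obj z.1 = c, q.map z.2 ≫ eqToHom h = f := by
  have hcomm : (Functor.const Pt).obj e ⋙ q = pick0 ⋙ ComposableArrows.mk₁ f := by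
    refine CategoryTheory.Functor.ext (fun X => rfl) ?_
    intro X Y g
    have : g = 𝟙 X := Subsingleton.elim _ _
    subst this
    simp [pick0, ComposableArrows.mk₁, ComposableArrows.Mk₁.obj]
  obtain ⟨H, ⟨hF, hG⟩, huniq⟩ := hq _ _ hcomm
  have h0 : H.obj 0 = e := Functor.congr_obj hF ⟨PUnit.unit⟩
  have h1 : q.obj (H.obj 1) = c := Functor.congr_obj hG 1
  have hm := Functor.congr_hom hG (homOfLE (by decide : (0 : Fin 2) ≤ 1))
  refine ⟨⟨H.obj 1, eqToHom h0.symm ≫ H.map (homOfLE (by decide))⟩, ⟨h1, ?_⟩, ?_⟩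
  · simp only [Functor.comp_map] at hm
    simp [hm, eqToHom_map, ComposableArrows.mk₁, ComposableArrows.Mk₁.obj]
    erw [eqToHom_trans_assoc, eqToHom_refl, Category.id_comp, eqToHom_trans, eqToHom_refl, Category.comp_id]
  · rintro ⟨e'', g⟩ ⟨h', hg⟩
    have hH' : ComposableArrows.mk₁ g = H := by
      apply huniq
      constructor
      · refine CategoryTheory.Functor.ext (fun X => rfl) ?_
        intro X Y gg
        have : gg = 𝟙 X := Subsingleton.elim _ _
        subst this
        simp [pick0, ComposableArrows.mk₁, ComposableArrows.Mk₁.obj]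
        exact (eqToHom_refl _ _).symm
      · refine fin2_ext rfl h' ?_
        simp [hg.symm, ComposableArrows.mk₁, ComposableArrows.Mk₁.obj]
        erw [eqToHom_trans, eqToHom_refl, Category.comp_id, Category.id_comp]
    have he : e'' = H.obj 1 := Functor.congr_obj hH' 1
    have hmg := Functor.congr_hom hH' (homOfLE (by decide : (0 : Fin 2) ≤ 1))
    subst he
    have : (ComposableArrows.mk₁ g).map (homOfLE (by decide : (0 : Fin 2) ≤ 1)) = g := rfl
    rw [this] at hmg
    have h0' : (ComposableArrows.mk₁ g).obj 0 = H.obj 0 := Functor.congr_obj hH' 0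
    refine Sigma.ext rfl (heq_of_eq ?_)
    rw [hmg]
    simp [ComposableArrows.mk₁, ComposableArrows.Mk₁.obj]

lemma lift1_existsUnique (hq : FunctorURLP pick1 q) (e' : E) {c : C} (f : c ⟶ q.obj e') :
    ∃! z : Σ e : E, (e ⟶ e'), ∃ h : q.obj z.1 = c, eqToHom h.symm ≫ q.map z.2 = f := by
  have hcomm : (Functor.const Pt).obj e' ⋙ q = pick1 ⋙ ComposableArrows.mk₁ f := by
    refine CategoryTheory.Functor.ext (fun X => rfl) ?_
    intro X Y g
    have : g = 𝟙 X := Subsingleton.elim _ _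
    subst this
    simp [pick1, ComposableArrows.mk₁, ComposableArrows.Mk₁.obj]
  obtain ⟨H, ⟨hF, hG⟩, huniq⟩ := hq _ _ hcomm
  have h1 : H.obj 1 = e' := Functor.congr_obj hF ⟨PUnit.unit⟩
  have h0 : q.obj (H.obj 0) = c := Functor.congr_obj hG 0
  have hm := Functor.congr_hom hG (homOfLE (by decide : (0 : Fin 2) ≤ 1))
  refine ⟨⟨H.obj 0, H.map (homOfLE (by decide)) ≫ eqToHom h1⟩, ⟨h0, ?_⟩, ?_⟩
  · simp only [Functor.comp_map] at hm
    simp [hm, eqToHom_map, ComposableArrows.mk₁, ComposableArrows.Mk₁.obj]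
    erw [eqToHom_trans_assoc, eqToHom_refl, Category.id_comp, eqToHom_trans, eqToHom_refl, Category.comp_id]
  · rintro ⟨e, g⟩ ⟨h', hg⟩
    have hH' : ComposableArrows.mk₁ g = H := by
      apply huniq
      constructor
      · refine CategoryTheory.Functor.ext (fun X => rfl) ?_
        intro X Y gg
        have : gg = 𝟙 X := Subsingleton.elim _ _
        subst this
        simp [pick1, ComposableArrows.mk₁, ComposableArrows.Mk₁.obj]
        exact (eqToHom_refl _ _).symm
      · refine fin2_ext h' rfl ?_
        rw [← hg]
        simp [ComposableArrows.mk₁, ComposableArrows.Mk₁.obj]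
    have he : e = H.obj 0 := Functor.congr_obj hH' 0
    have hmg := Functor.congr_hom hH' (homOfLE (by decide : (0 : Fin 2) ≤ 1))
    subst he
    have : (ComposableArrows.mk₁ g).map (homOfLE (by decide : (0 : Fin 2) ≤ 1)) = g := rfl
    rw [this] at hmg
    refine Sigma.ext rfl (heq_of_eq ?_)
    rw [hmg]
    simp [ComposableArrows.mk₁, ComposableArrows.Mk₁.obj]
    erw [eqToHom_refl, Category.id_comp]

section Lifts

variable (hq0 : FunctorURLP pick0 q) (hq1 : FunctorURLP pick1 q)

noncomputable def fwdZ (e : E) {c : C} (f : q.obj e ⟶ c) : Σ e' : E, (e ⟶ e') :=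
  (lift0_existsUnique hq0 e f).exists.choose

lemma fwdZ_spec (e : E) {c : C} (f : q.obj e ⟶ c) :
    ∃ h : q.obj (fwdZ hq0 e f).1 = c, q.map (fwdZ hq0 e f).2 ≫ eqToHom h = f :=
  (lift0_existsUnique hq0 e f).exists.choose_spec

lemma fwd_obj_s12 (e : E) {c : C} (f : q.obj e ⟶ c) : q.obj (fwdZ hq0 e f).1 = c :=
  (fwdZ_spec hq0 e f).choose

lemma fwd_fac (e : E) {c : C} (f : q.obj e ⟶ c) :
    q.map (fwdZ hq0 e f).2 ≫ eqToHom (fwd_obj_s12 hq0 e f) = f :=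
  (fwdZ_spec hq0 e f).choose_spec

lemma fwd_uniq_s12 {e : E} {c : C} {f : q.obj e ⟶ c} {e' : E} (g : e ⟶ e')
    (h : q.obj e' = c) (hg : q.map g ≫ eqToHom h = f) :
    e' = (fwdZ hq0 e f).1 ∧ HEq g (fwdZ hq0 e f).2 := by
  have hu := (lift0_existsUnique hq0 e f).unique
    (show ∃ hh : q.obj (⟨e', g⟩ : Σ e' : E, (e ⟶ e')).1 = c, _ from ⟨h, hg⟩)
    (fwdZ_spec hq0 e f)
  refine ⟨congrArg Sigma.fst hu, ?_⟩
  rw [← hu]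

end Lifts

lemma fwd_uniq₂ (hq0 : FunctorURLP pick0 q) {e : E} {c : C} {f : q.obj e ⟶ c} {e₁ e₂ : E} (g₁ : e ⟶ e₁) (g₂ : e ⟶ e₂)
    (h₁ : q.obj e₁ = c) (h₂ : q.obj e₂ = c)
    (k₁ : q.map g₁ ≫ eqToHom h₁ = f) (k₂ : q.map g₂ ≫ eqToHom h₂ = f) :
    e₁ = e₂ ∧ HEq g₁ g₂ := by
  obtain ⟨ha, hb⟩ := fwd_uniq_s12 hq0 g₁ h₁ k₁
  obtain ⟨hc, hd⟩ := fwd_uniq_s12 hq0 g₂ h₂ k₂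
  exact ⟨ha.trans hc.symm, hb.trans hd.symm⟩

section Lifts2

variable (hq1 : FunctorURLP pick1 q)

noncomputable def bwdZ (e' : E) {c : C} (f : c ⟶ q.obj e') : Σ e : E, (e ⟶ e') :=
  (lift1_existsUnique hq1 e' f).exists.choose

lemma bwdZ_spec (e' : E) {c : C} (f : c ⟶ q.obj e') :
    ∃ h : q.obj (bwdZ hq1 e' f).1 = c, eqToHom h.symm ≫ q.map (bwdZ hq1 e' f).2 = f :=
  (lift1_existsUnique hq1 e' f).exists.choose_spec

end Lifts2

lemma bwd_uniq₂ (hq1 : FunctorURLP pick1 q) {e' : E} {c : C} {f : c ⟶ q.obj e'} {e₁ e₂ : E} (g₁ : e₁ ⟶ e') (g₂ : e₂ ⟶ e')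
    (h₁ : q.obj e₁ = c) (h₂ : q.obj e₂ = c)
    (k₁ : eqToHom h₁.symm ≫ q.map g₁ = f) (k₂ : eqToHom h₂.symm ≫ q.map g₂ = f) :
    e₁ = e₂ ∧ HEq g₁ g₂ := by
  have hu₁ := (lift1_existsUnique hq1 e' f).unique
    (show ∃ hh : q.obj (⟨e₁, g₁⟩ : Σ e : E, (e ⟶ e')).1 = c, _ from ⟨h₁, k₁⟩)
    (show ∃ hh : q.obj (⟨e₂, g₂⟩ : Σ e : E, (e ⟶ e')).1 = c, _ from ⟨h₂, k₂⟩)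
  have h2 : e₁ = e₂ ∧ HEq g₁ g₂ := by simpa using hu₁
  exact h2

lemma eq_of_heq_hom {X Y Y' : E} (h : Y = Y') {g : X ⟶ Y} {g' : X ⟶ Y'} (hh : HEq g g') :
    g' = g ≫ eqToHom h := by
  subst h
  simp [eq_of_heq hh.symm]

variable (q) in
/-- The fiber functor of a covering. -/
noncomputable def Fib (hq0 : FunctorURLP pick0 q) : C ⥤ Type _ where
  obj c := {e : E // q.obj e = c}
  map {c c'} f := TypeCat.ofHom fun a => ⟨(fwdZ hq0 a.1 (eqToHom a.2 ≫ f)).1, fwd_obj_s12 hq0 a.1 _⟩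
  map_id c := by
    refine ConcreteCategory.hom_ext _ _ fun a => ?_
    exact Subtype.ext (fwd_uniq_s12 hq0 (𝟙 a.1) a.2 (by simp)).1.symm
  map_comp {c c' c''} f g := by
    refine ConcreteCategory.hom_ext _ _ fun a => ?_
    refine Subtype.ext ?_
    show (fwdZ hq0 a.1 (eqToHom a.2 ≫ (f ≫ g))).1 = (fwdZ hq0 _ (eqToHom (fwd_obj_s12 hq0 a.1 (eqToHom a.2 ≫ f)) ≫ g)).1
    refine (fwd_uniq_s12 hq0 ((fwdZ hq0 a.1 (eqToHom a.2 ≫ f)).2 ≫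
      (fwdZ hq0 _ (eqToHom (fwd_obj_s12 hq0 a.1 (eqToHom a.2 ≫ f)) ≫ g)).2)
      (fwd_obj_s12 hq0 _ _) ?_).1.symm
    rw [Functor.map_comp, Category.assoc, fwd_fac]
    rw [← Category.assoc, fwd_fac, Category.assoc]

lemma Fib_map_bijective (hq0 : FunctorURLP pick0 q) (hq1 : FunctorURLP pick1 q)
    {c c' : C} (f : c ⟶ c') : Function.Bijective ((Fib q hq0).map f) := by
  constructor
  · rintro ⟨e₁, h₁⟩ ⟨e₂, h₂⟩ hab
    have hv : (fwdZ hq0 e₁ (eqToHom h₁ ≫ f)).1 = (fwdZ hq0 e₂ (eqToHom h₂ ≫ f)).1 :=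
      congrArg Subtype.val hab
    refine Subtype.ext ?_
    refine (bwd_uniq₂ hq1 (e' := (fwdZ hq0 e₁ (eqToHom h₁ ≫ f)).1)
      (f := f ≫ eqToHom (fwd_obj_s12 hq0 e₁ (eqToHom h₁ ≫ f)).symm)
      ((fwdZ hq0 e₁ (eqToHom h₁ ≫ f)).2)
      ((fwdZ hq0 e₂ (eqToHom h₂ ≫ f)).2 ≫ eqToHom hv.symm) h₁ h₂ ?_ ?_).1
    · have hfac := fwd_fac hq0 e₁ (eqToHom h₁ ≫ f)
      calc eqToHom h₁.symm ≫ q.map (fwdZ hq0 e₁ (eqToHom h₁ ≫ f)).2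
          = eqToHom h₁.symm ≫ (q.map (fwdZ hq0 e₁ (eqToHom h₁ ≫ f)).2 ≫
            eqToHom (fwd_obj_s12 hq0 e₁ (eqToHom h₁ ≫ f))) ≫
            eqToHom (fwd_obj_s12 hq0 e₁ (eqToHom h₁ ≫ f)).symm := by simp
        _ = eqToHom h₁.symm ≫ (eqToHom h₁ ≫ f) ≫
            eqToHom (fwd_obj_s12 hq0 e₁ (eqToHom h₁ ≫ f)).symm := by rw [hfac]
        _ = f ≫ eqToHom (fwd_obj_s12 hq0 e₁ (eqToHom h₁ ≫ f)).symm := by simp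
    · have hfac := fwd_fac hq0 e₂ (eqToHom h₂ ≫ f)
      rw [Functor.map_comp, eqToHom_map]
      calc eqToHom h₂.symm ≫ q.map (fwdZ hq0 e₂ (eqToHom h₂ ≫ f)).2 ≫
            eqToHom (congrArg q.obj hv.symm)
          = eqToHom h₂.symm ≫ ((q.map (fwdZ hq0 e₂ (eqToHom h₂ ≫ f)).2 ≫
            eqToHom (fwd_obj_s12 hq0 e₂ (eqToHom h₂ ≫ f))) ≫
            (eqToHom (fwd_obj_s12 hq0 e₂ (eqToHom h₂ ≫ f)).symm ≫
            eqToHom (congrArg q.obj hv.symm))) := by simp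
        _ = eqToHom h₂.symm ≫ ((eqToHom h₂ ≫ f) ≫
            (eqToHom (fwd_obj_s12 hq0 e₂ (eqToHom h₂ ≫ f)).symm ≫
            eqToHom (congrArg q.obj hv.symm))) := by rw [hfac]
        _ = f ≫ eqToHom (fwd_obj_s12 hq0 e₁ (eqToHom h₁ ≫ f)).symm := by simp
  · rintro ⟨e', h'⟩
    obtain ⟨h₀, k₀⟩ := bwdZ_spec hq1 e' (f ≫ eqToHom h'.symm)
    refine ⟨⟨(bwdZ hq1 e' (f ≫ eqToHom h'.symm)).1, h₀⟩, Subtype.ext ?_⟩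
    refine ((fwd_uniq_s12 hq0 (bwdZ hq1 e' (f ≫ eqToHom h'.symm)).2 h' ?_).1).symm
    rw [show q.map (bwdZ hq1 e' (f ≫ eqToHom h'.symm)).2 =
      eqToHom h₀ ≫ (eqToHom h₀.symm ≫ q.map (bwdZ hq1 e' (f ≫ eqToHom h'.symm)).2) by simp]
    rw [k₀]
    simp


section UnivCover

variable {C : Type u} [Category.{v} C] {E : Type u'} [Category.{v'} E] (q : E ⥤ C)

lemma eqToHom_apply_type {A B : Type w} (h : A = B) (a : A) : eqToHom h a = cast h a := by
  subst h; rfl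

/-- The fiber functor extended to the groupoidification. -/
noncomputable def FibPi (hq : IsCovering q) : piCat C ⥤ Type u' :=
  Localization.Construction.lift (Fib q hq.1)
    (fun _ _ f _ => (isIso_iff_bijective _).2 (Fib_map_bijective hq.1 hq.2 f))

lemma FibPi_fac (hq : IsCovering q) : piQ C ⋙ FibPi q hq = Fib q hq.1 :=
  Localization.Construction.fac _ _

/-- Transport in the fibers of a covering along a morphism of the groupoidification. -/
noncomputable def fibTrans (hq : IsCovering q) {c c' : C}
    (w : (piQ C).obj c ⟶ (piQ C).obj c') (a : (Fib q hq.1).obj c) : (Fib q hq.1).obj c' :=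
  eqToHom (Functor.congr_obj (FibPi_fac q hq) c')
    ((FibPi q hq).map w (eqToHom (Functor.congr_obj (FibPi_fac q hq) c).symm a))

lemma fibTrans_id (hq : IsCovering q) (c : C) (a : (Fib q hq.1).obj c) :
    fibTrans q hq (𝟙 ((piQ C).obj c)) a = a := by
  simp [fibTrans, eqToHom_apply_type]

lemma fibTrans_comp (hq : IsCovering q) {c c' c'' : C}
    (w : (piQ C).obj c ⟶ (piQ C).obj c') (w' : (piQ C).obj c' ⟶ (piQ C).obj c'')
    (a : (Fib q hq.1).obj c) :
    fibTrans q hq (w ≫ w') a = fibTrans q hq w' (fibTrans q hq w a) := by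
  simp [fibTrans, eqToHom_apply_type]

lemma fibTrans_Q (hq : IsCovering q) {c c' : C} (f : c ⟶ c') (a : (Fib q hq.1).obj c) :
    fibTrans q hq ((piQ C).map f) a = (Fib q hq.1).map f a := by
  have h := Functor.congr_hom (FibPi_fac q hq) f
  simp only [Functor.comp_map] at h
  simp [fibTrans, h, eqToHom_apply_type]

end UnivCover

section Alpha

variable {C : Type u} [Category.{v} C] {E : Type u'} [Category.{v'} E]
  {x : C} {e : E} (q : E ⥤ C) (hq : IsCovering q) (hbase : q.obj e = x)

@[simp]
lemma chat_id_val (z : Chat C x) : (𝟙 z : z ⟶ z).1 = 𝟙 z.1 := rfl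

@[simp]
lemma chat_comp_val {z₁ z₂ z₃ : Chat C x} (φ : z₁ ⟶ z₂) (ψ : z₂ ⟶ z₃) :
    (φ ≫ ψ : z₁ ⟶ z₃).1 = φ.1 ≫ ψ.1 := rfl

/-- The underlying fiber element of the canonical map `Ĉ ⥤ E`. -/
noncomputable def alphaObj (z : Chat C x) : (Fib q hq.1).obj z.1 :=
  fibTrans q hq z.2 ⟨e, hbase⟩

lemma alphaObj_succ {z z' : Chat C x} (φ : z ⟶ z') :
    (Fib q hq.1).map φ.1 (alphaObj q hq hbase z) = alphaObj q hq hbase z' := by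
  have h2 : z.2 ≫ (piQ C).map φ.1 = z'.2 := φ.2
  have h3 : fibTrans q hq (z.2 ≫ (piQ C).map φ.1) ⟨e, hbase⟩ =
      fibTrans q hq z'.2 ⟨e, hbase⟩ := by rw [h2]
  show _ = fibTrans q hq z'.2 _
  rw [← h3]
  exact ((fibTrans_comp q hq _ _ _).trans (fibTrans_Q q hq _ _)).symm

lemma alphaObj_succ_val {z z' : Chat C x} (φ : z ⟶ z') :
    (fwdZ hq.1 (alphaObj q hq hbase z).1 (eqToHom (alphaObj q hq hbase z).2 ≫ φ.1)).1 =
      (alphaObj q hq hbase z').1 :=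
  congrArg Subtype.val (alphaObj_succ q hq hbase φ)

/-- The canonical base-point preserving map `Ĉ ⥤ E` over `C`. -/
noncomputable def alpha : Chat C x ⥤ E where
  obj z := (alphaObj q hq hbase z).1
  map {z z'} φ :=
    (fwdZ hq.1 (alphaObj q hq hbase z).1
        (eqToHom (alphaObj q hq hbase z).2 ≫ φ.1)).2 ≫
      eqToHom (alphaObj_succ_val q hq hbase φ)
  map_id z := by
    obtain ⟨h1, h2⟩ := fwd_uniq_s12 hq.1 (f := eqToHom (alphaObj q hq hbase z).2 ≫ (𝟙 z : z ⟶ z).1)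
      (𝟙 (alphaObj q hq hbase z).1) (alphaObj q hq hbase z).2 (by simp)
    have h3 := eq_of_heq_hom h1 h2
    dsimp only
    rw [h3]
    simp
    erw [eqToHom_trans, eqToHom_refl]
  map_comp {z z' z''} φ ψ := by
    have F1 := fwd_fac hq.1 (alphaObj q hq hbase z).1 (eqToHom (alphaObj q hq hbase z).2 ≫ φ.1)
    have F2 := fwd_fac hq.1 (alphaObj q hq hbase z').1 (eqToHom (alphaObj q hq hbase z').2 ≫ ψ.1)
    have hlift : q.map ((fwdZ hq.1 (alphaObj q hq hbase z).1
          (eqToHom (alphaObj q hq hbase z).2 ≫ φ.1)).2 ≫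
          eqToHom (alphaObj_succ_val q hq hbase φ) ≫
          (fwdZ hq.1 (alphaObj q hq hbase z').1
            (eqToHom (alphaObj q hq hbase z').2 ≫ ψ.1)).2) ≫
        eqToHom (fwd_obj_s12 hq.1 (alphaObj q hq hbase z').1
          (eqToHom (alphaObj q hq hbase z').2 ≫ ψ.1)) =
        eqToHom (alphaObj q hq hbase z).2 ≫ (φ ≫ ψ).1 := by
      calc q.map ((fwdZ hq.1 (alphaObj q hq hbase z).1
            (eqToHom (alphaObj q hq hbase z).2 ≫ φ.1)).2 ≫
            eqToHom (alphaObj_succ_val q hq hbase φ) ≫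
            (fwdZ hq.1 (alphaObj q hq hbase z').1
              (eqToHom (alphaObj q hq hbase z').2 ≫ ψ.1)).2) ≫
          eqToHom (fwd_obj_s12 hq.1 (alphaObj q hq hbase z').1
            (eqToHom (alphaObj q hq hbase z').2 ≫ ψ.1))
          = (q.map (fwdZ hq.1 (alphaObj q hq hbase z).1
              (eqToHom (alphaObj q hq hbase z).2 ≫ φ.1)).2 ≫
            eqToHom (fwd_obj_s12 hq.1 (alphaObj q hq hbase z).1
              (eqToHom (alphaObj q hq hbase z).2 ≫ φ.1))) ≫
            eqToHom (fwd_obj_s12 hq.1 (alphaObj q hq hbase z).1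
              (eqToHom (alphaObj q hq hbase z).2 ≫ φ.1)).symm ≫
            eqToHom (congrArg q.obj (alphaObj_succ_val q hq hbase φ)) ≫
            (q.map (fwdZ hq.1 (alphaObj q hq hbase z').1
              (eqToHom (alphaObj q hq hbase z').2 ≫ ψ.1)).2 ≫
            eqToHom (fwd_obj_s12 hq.1 (alphaObj q hq hbase z').1
              (eqToHom (alphaObj q hq hbase z').2 ≫ ψ.1))) := by
            simp [eqToHom_map]
        _ = (eqToHom (alphaObj q hq hbase z).2 ≫ φ.1) ≫
            eqToHom (fwd_obj_s12 hq.1 (alphaObj q hq hbase z).1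
              (eqToHom (alphaObj q hq hbase z).2 ≫ φ.1)).symm ≫
            eqToHom (congrArg q.obj (alphaObj_succ_val q hq hbase φ)) ≫
            (eqToHom (alphaObj q hq hbase z').2 ≫ ψ.1) := by rw [F1, F2]
        _ = eqToHom (alphaObj q hq hbase z).2 ≫ (φ ≫ ψ).1 := by simp
    obtain ⟨h1, h2⟩ := fwd_uniq_s12 hq.1 _ _ hlift
    dsimp only
    rw [eq_of_heq_hom h1 h2]
    simp
    erw [eqToHom_trans]

lemma alpha_obj_pt : (alpha q hq hbase).obj (chatPt C x) = e :=
  congrArg Subtype.val (fibTrans_id q hq x ⟨e, hbase⟩)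

lemma alpha_comp : alpha q hq hbase ⋙ q = chatT C x := by
  refine CategoryTheory.Functor.ext (fun z => (alphaObj q hq hbase z).2) ?_
  intro z z' φ
  have F1 := fwd_fac hq.1 (alphaObj q hq hbase z).1 (eqToHom (alphaObj q hq hbase z).2 ≫ φ.1)
  show q.map ((fwdZ hq.1 (alphaObj q hq hbase z).1
      (eqToHom (alphaObj q hq hbase z).2 ≫ φ.1)).2 ≫
      eqToHom (alphaObj_succ_val q hq hbase φ)) = _
  calc q.map ((fwdZ hq.1 (alphaObj q hq hbase z).1
        (eqToHom (alphaObj q hq hbase z).2 ≫ φ.1)).2 ≫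
        eqToHom (alphaObj_succ_val q hq hbase φ))
      = (q.map (fwdZ hq.1 (alphaObj q hq hbase z).1
          (eqToHom (alphaObj q hq hbase z).2 ≫ φ.1)).2 ≫
        eqToHom (fwd_obj_s12 hq.1 (alphaObj q hq hbase z).1
          (eqToHom (alphaObj q hq hbase z).2 ≫ φ.1))) ≫
        eqToHom (fwd_obj_s12 hq.1 (alphaObj q hq hbase z).1
          (eqToHom (alphaObj q hq hbase z).2 ≫ φ.1)).symm ≫
        eqToHom (congrArg q.obj (alphaObj_succ_val q hq hbase φ)) := by
        simp [eqToHom_map]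
    _ = (eqToHom (alphaObj q hq hbase z).2 ≫ φ.1) ≫
        eqToHom (fwd_obj_s12 hq.1 (alphaObj q hq hbase z).1
          (eqToHom (alphaObj q hq hbase z).2 ≫ φ.1)).symm ≫
        eqToHom (congrArg q.obj (alphaObj_succ_val q hq hbase φ)) := by
        rw [F1]
    _ = eqToHom (alphaObj q hq hbase z).2 ≫ (chatT C x).map φ ≫
        eqToHom (alphaObj q hq hbase z').2.symm := by
        simp [chatT, CategoryOfElements.π]

end Alpha

section Rigidity

variable {C : Type u} [Category.{v} C] {E : Type u'} [Category.{v'} E] {q : E ⥤ C}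
  {D : Type*} [Category D] {T' : D ⥤ C} {β γ : D ⥤ E}

lemma covering_step_fwd (hq0 : FunctorURLP pick0 q) (hβ : β ⋙ q = T') (hγ : γ ⋙ q = T')
    {z z' : D} (φ : z ⟶ z') (h : β.obj z = γ.obj z) : β.obj z' = γ.obj z' := by
  have hcβ := Functor.congr_hom hβ φ
  have hcγ := Functor.congr_hom hγ φ
  simp only [Functor.comp_map] at hcβ hcγ
  refine (fwd_uniq₂ hq0 (f := eqToHom (Functor.congr_obj hγ z) ≫ T'.map φ)
    (eqToHom h.symm ≫ β.map φ) (γ.map φ)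
    (Functor.congr_obj hβ z') (Functor.congr_obj hγ z') ?_ ?_).1
  · rw [Functor.map_comp, eqToHom_map, hcβ]
    simp
  · rw [hcγ]
    simp

lemma covering_step_bwd (hq1 : FunctorURLP pick1 q) (hβ : β ⋙ q = T') (hγ : γ ⋙ q = T')
    {z z' : D} (φ : z' ⟶ z) (h : β.obj z = γ.obj z) : β.obj z' = γ.obj z' := by
  have hcβ := Functor.congr_hom hβ φ
  have hcγ := Functor.congr_hom hγ φ
  simp only [Functor.comp_map] at hcβ hcγ
  refine (bwd_uniq₂ hq1 (f := T'.map φ ≫ eqToHom (Functor.congr_obj hγ z).symm)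
    (β.map φ ≫ eqToHom h) (γ.map φ)
    (Functor.congr_obj hβ z') (Functor.congr_obj hγ z') ?_ ?_).1
  · rw [Functor.map_comp, eqToHom_map, hcβ]
    simp
  · rw [hcγ]
    simp

lemma covering_map_eq (hq0 : FunctorURLP pick0 q) (hβ : β ⋙ q = T') (hγ : γ ⋙ q = T')
    (hobj : ∀ z, β.obj z = γ.obj z) {z z' : D} (φ : z ⟶ z') :
    β.map φ = eqToHom (hobj z) ≫ γ.map φ ≫ eqToHom (hobj z').symm := by
  have hcβ := Functor.congr_hom hβ φ
  have hcγ := Functor.congr_hom hγ φ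
  simp only [Functor.comp_map] at hcβ hcγ
  obtain ⟨h1, h2⟩ := fwd_uniq₂ hq0 (f := eqToHom (Functor.congr_obj hβ z) ≫ T'.map φ)
    (β.map φ) (eqToHom (hobj z) ≫ γ.map φ)
    (Functor.congr_obj hβ z') (Functor.congr_obj hγ z')
    (by rw [hcβ]; simp)
    (by rw [Functor.map_comp, eqToHom_map, hcγ]; simp)
  have h3 := eq_of_heq_hom (hobj z') h2
  rw [← Category.assoc, h3]
  simp

end Rigidity

section Conn

variable {C : Type u} [Category.{v} C] {x : C}

lemma chat_zigzag (z : Chat C x) : Zigzag (chatPt C x) z := by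
  let P : MorphismProperty (piCat C) := fun X Y w =>
    ∀ (c c' : C) (hX : (piQ C).obj c = X) (hY : (piQ C).obj c' = Y)
      (u : (piQ C).obj x ⟶ (piQ C).obj c),
      Zigzag (J := Chat C x) ⟨c, u⟩ ⟨c', u ≫ eqToHom hX ≫ w ≫ eqToHom hY.symm⟩
  haveI : P.IsStableUnderComposition := by
    constructor
    intro X Y Z w₁ w₂ h₁ h₂ c c'' hX hZ u
    obtain ⟨c', hY⟩ : ∃ c' : C, (piQ C).obj c' = Y :=
      ⟨((Localization.Construction.objEquiv (⊤ : MorphismProperty C)).symm Y),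
        (Localization.Construction.objEquiv (⊤ : MorphismProperty C)).apply_symm_apply Y⟩
    have t₁ := h₁ c c' hX hY u
    have t₂ := h₂ c' c'' hY hZ (u ≫ eqToHom hX ≫ w₁ ≫ eqToHom hY.symm)
    have hv : (u ≫ eqToHom hX ≫ w₁ ≫ eqToHom hY.symm) ≫ eqToHom hY ≫ w₂ ≫ eqToHom hZ.symm =
        u ≫ eqToHom hX ≫ (w₁ ≫ w₂) ≫ eqToHom hZ.symm := by simp
    rw [← hv]
    exact t₁.trans t₂
  have htop : P = ⊤ := by
    apply Localization.Construction.morphismProperty_eq_top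
    · intro a b f c c' hX hY u
      obtain rfl : c = a := (Localization.Construction.objEquiv (⊤ : MorphismProperty C)).injective hX
      obtain rfl : c' = b := (Localization.Construction.objEquiv (⊤ : MorphismProperty C)).injective hY
      have hv : u ≫ eqToHom hX ≫ (piQ C).map f ≫ eqToHom hY.symm = u ≫ (piQ C).map f := by
        simp
      rw [hv]
      exact Relation.ReflTransGen.single (Or.inl ⟨⟨f, rfl⟩⟩)
    · intro a b w hw c c' hX hY u
      obtain rfl : c = b := (Localization.Construction.objEquiv (⊤ : MorphismProperty C)).injective hX
      obtain rfl : c' = a := (Localization.Construction.objEquiv (⊤ : MorphismProperty C)).injective hY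
      have hv : u ≫ eqToHom hX ≫ Localization.Construction.wInv w hw ≫ eqToHom hY.symm =
          u ≫ Localization.Construction.wInv w hw := by simp
      rw [hv]
      refine Relation.ReflTransGen.single (Or.inr ⟨⟨w, ?_⟩⟩)
      show (u ≫ Localization.Construction.wInv w hw) ≫ (piQ C).map w = u
      have hQ : (piQ C).map w = (Localization.Construction.wIso w (by trivial)).hom := rfl
      rw [hQ, Category.assoc]
      simp only [Localization.Construction.wInv, Iso.inv_hom_id, Category.comp_id]
  have hP : P z.2 := by
    rw [htop]
    trivial
  have hz := hP x z.1 rfl rfl (𝟙 ((piQ C).obj x))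
  have hv : 𝟙 ((piQ C).obj x) ≫ eqToHom rfl ≫ z.2 ≫ eqToHom rfl = z.2 := by simp; exact Category.comp_id _
  rw [hv] at hz
  exact hz

end Conn


end Covering

end Paper

namespace Paper

/-- **Statement 13.** Let `C` and `E` be path connected pointed small categories and
`q : E ⥤ C` a covering preserving the base point.  Then there exists a unique
base-point-preserving functor `α : Ĉ ⥤ E` with `q ∘ α = T`, where `T : Ĉ ⥤ C` is the
universal cover of `C`. -/
theorem universal_cover_maps_to_any_cover
    (C : Type u) (E : Type u') [Category.{v} C] [Category.{v'} E]
    [IsConnected C] [IsConnected E]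
    (x : C) (e : E) (q : E ⥤ C) (hq : IsCovering q) (hbase : q.obj e = x) :
    ∃! α : Chat C x ⥤ E, α.obj (chatPt C x) = e ∧ α ⋙ q = chatT C x := by
  refine ⟨alpha q hq hbase, ⟨alpha_obj_pt q hq hbase, alpha_comp q hq hbase⟩, ?_⟩
  rintro β ⟨hpt, hcompβ⟩
  have hobj : ∀ z : Chat C x, β.obj z = (alpha q hq hbase).obj z := by
    intro z
    induction chat_zigzag z with
    | refl => exact hpt.trans (alpha_obj_pt q hq hbase).symm
    | tail hab hbc ih =>
      rcases hbc with ⟨⟨φ⟩⟩ | ⟨⟨φ⟩⟩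
      · exact covering_step_fwd hq.1 hcompβ (alpha_comp q hq hbase) φ ih
      · exact covering_step_bwd hq.2 hcompβ (alpha_comp q hq hbase) φ ih
  exact CategoryTheory.Functor.ext hobj
    (fun z z' φ => covering_map_eq hq.1 hcompβ (alpha_comp q hq hbase) hobj φ)

end Paper
end

section
/- A functor p : E → B between small categories is a covering if and only if p is a fibration in the 1-type model structure (i.e., has the right lifting property with respect to every member of J) and for every object b of B the fiber category p⁻¹(b) is discrete (its only morphisms are identities). -/
open CategoryTheory

universe v u v' u' w
namespace Paper
open CategoryTheory

section Basics
variable {C : Type*} [Category C]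

lemma Pt_ext {F G : Pt ⥤ C} (h : F.obj ⟨⟨⟩⟩ = G.obj ⟨⟨⟩⟩) : F = G := by
  refine CategoryTheory.Functor.ext (fun x => by obtain ⟨⟨⟩⟩ := x; exact h) ?_
  rintro ⟨⟨⟩⟩ ⟨⟨⟩⟩ f
  have : f = 𝟙 _ := Subsingleton.elim _ _
  subst this
  simp

end Basics

/-- notation for the nontrivial arrows -/
abbrev ar2 : (0 : Fin 2) ⟶ 1 := homOfLE (by decide)
abbrev ar01 : (0 : Fin 3) ⟶ 1 := homOfLE (by decide)
abbrev ar12 : (1 : Fin 3) ⟶ 2 := homOfLE (by decide)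
abbrev ar02 : (0 : Fin 3) ⟶ 2 := homOfLE (by decide)

section mkTests
variable {C : Type*} [Category C] {X Y Z : C}
example (f : X ⟶ Y) : (ComposableArrows.mk₁ f).obj 0 = X := rfl
example (f : X ⟶ Y) : (ComposableArrows.mk₁ f).obj 1 = Y := rfl
example (f : X ⟶ Y) : (ComposableArrows.mk₁ f).map ar2 = f := rfl
example (f : X ⟶ Y) (g : Y ⟶ Z) : (ComposableArrows.mk₂ f g).obj 0 = X := rfl
example (f : X ⟶ Y) (g : Y ⟶ Z) : (ComposableArrows.mk₂ f g).obj 1 = Y := rfl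
example (f : X ⟶ Y) (g : Y ⟶ Z) : (ComposableArrows.mk₂ f g).obj 2 = Z := rfl
example (f : X ⟶ Y) (g : Y ⟶ Z) : (ComposableArrows.mk₂ f g).map ar01 = f := rfl
example (f : X ⟶ Y) (g : Y ⟶ Z) : (ComposableArrows.mk₂ f g).map ar12 = g := rfl
example (f : X ⟶ Y) (g : Y ⟶ Z) : (ComposableArrows.mk₂ f g).map ar02 = f ≫ g := rfl
end mkTests

lemma congr_hom_mk1 {C : Type*} [Category C] {X Y : C} {f : X ⟶ Y} {F : Fin 2 ⥤ C}
    (h : F = ComposableArrows.mk₁ f) :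
    F.map ar2 = eqToHom (show F.obj 0 = X from Functor.congr_obj h 0) ≫ f ≫
      eqToHom (show Y = F.obj 1 from (Functor.congr_obj h 1).symm) := by
  subst h; erw [eqToHom_refl, eqToHom_refl, Category.id_comp, Category.comp_id]; rfl

section Elementary
open ComposableArrows
variable {E : Type u} {B : Type u'} [Category.{v} E] [Category.{v'} B] (p : E ⥤ B)

/-- Existence of lifts of morphisms out of a given object. -/
def Ex0 : Prop := ∀ (e : E) (b : B) (g : p.obj e ⟶ b),
  ∃ (e' : E) (hb : p.obj e' = b) (f : e ⟶ e'), p.map f = g ≫ eqToHom hb.symm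

/-- Uniqueness of lifts of morphisms out of a given object. -/
def Un0 : Prop := ∀ (e e1 e2 : E) (f1 : e ⟶ e1) (f2 : e ⟶ e2) (h : p.obj e1 = p.obj e2),
  p.map f1 ≫ eqToHom h = p.map f2 → ∃ h' : e1 = e2, f1 ≫ eqToHom h' = f2

variable {p}

lemma ex0_of_urlp0 (hp : FunctorURLP pick0 p) : Ex0 p := by
  intro e b g
  obtain ⟨H, ⟨h1, h2⟩, -⟩ := hp ((Functor.const Pt).obj e) (mk₁ g) (Pt_ext rfl)
  have h0 : H.obj 0 = e := Functor.congr_obj h1 ⟨⟨⟩⟩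
  have hb : p.obj (H.obj 1) = b := Functor.congr_obj h2 1
  refine ⟨H.obj 1, hb, eqToHom h0.symm ≫ H.map ar2, ?_⟩
  have hm := congr_hom_mk1 h2
  simp only [Functor.comp_map] at hm
  rw [Functor.map_comp, eqToHom_map, hm]
  simp

lemma un0_of_urlp0 (hp : FunctorURLP pick0 p) : Un0 p := by
  intro e e1 e2 f1 f2 h hf
  obtain ⟨H, -, hu⟩ := hp ((Functor.const Pt).obj e) (mk₁ (p.map f1)) (Pt_ext rfl)
  have e1' : mk₁ f1 ⋙ p = mk₁ (p.map f1) := ext₁ rfl rfl (by erw [eqToHom_refl, eqToHom_refl, Category.id_comp, Category.comp_id]; rfl)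
  have e2' : mk₁ f2 ⋙ p = mk₁ (p.map f1) := ext₁ rfl h.symm (by erw [eqToHom_refl, Category.id_comp]; exact hf.symm)
  have k1 : mk₁ f1 = H := hu _ ⟨Pt_ext rfl, e1'⟩
  have k2 : mk₁ f2 = H := hu _ ⟨Pt_ext rfl, e2'⟩
  have k := k1.trans k2.symm
  have ho : e1 = e2 := Functor.congr_obj k 1
  refine ⟨ho, ?_⟩
  subst ho
  have hm := Functor.congr_hom k ar2
  erw [eqToHom_refl, eqToHom_refl, Category.id_comp, Category.comp_id] at hm
  simp only [eqToHom_refl, Category.comp_id]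
  exact hm

variable (p)

lemma ex0_op_of_urlp1 (hp : FunctorURLP pick1 p) : Ex0 p.op := by
  intro e b g
  obtain ⟨H, ⟨h1, h2⟩, -⟩ := hp ((Functor.const Pt).obj e.unop) (mk₁ g.unop) (Pt_ext rfl)
  have h1' : H.obj 1 = e.unop := Functor.congr_obj h1 ⟨⟨⟩⟩
  have hb0 : p.obj (H.obj 0) = b.unop := Functor.congr_obj h2 0
  refine ⟨Opposite.op (H.obj 0), by rw [show p.op.obj (Opposite.op (H.obj 0)) =
    Opposite.op (p.obj (H.obj 0)) from rfl, hb0, Opposite.op_unop],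
    (H.map ar2 ≫ eqToHom h1').op, ?_⟩
  have hm := congr_hom_mk1 h2
  simp only [Functor.comp_map] at hm
  show (p.map (H.map ar2 ≫ eqToHom h1')).op = _
  rw [Functor.map_comp, eqToHom_map, hm]
  simp

lemma un0_op_of_urlp1 (hp : FunctorURLP pick1 p) : Un0 p.op := by
  intro e e1 e2 f1 f2 h hf
  have h' : p.obj e2.unop = p.obj e1.unop := (congrArg Opposite.unop h).symm
  have hf' : p.map f2.unop = eqToHom h' ≫ p.map f1.unop := by
    have := congrArg Quiver.Hom.unop hf
    simpa using this.symm
  obtain ⟨H, -, hu⟩ := hp ((Functor.const Pt).obj e.unop) (mk₁ (p.map f1.unop)) (Pt_ext rfl)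
  have e1' : mk₁ f1.unop ⋙ p = mk₁ (p.map f1.unop) := ext₁ rfl rfl (by erw [eqToHom_refl, eqToHom_refl, Category.id_comp, Category.comp_id]; rfl)
  have e2' : mk₁ f2.unop ⋙ p = mk₁ (p.map f1.unop) := ext₁ h' rfl (by erw [eqToHom_refl, Category.comp_id]; exact hf')
  have k := (hu (mk₁ f1.unop) ⟨Pt_ext rfl, e1'⟩).trans (hu (mk₁ f2.unop) ⟨Pt_ext rfl, e2'⟩).symm
  have ho : e1.unop = e2.unop := Functor.congr_obj k 0
  have ho' : e1 = e2 := Opposite.unop_injective ho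
  refine ⟨ho', ?_⟩
  subst ho'
  have hm := Functor.congr_hom k ar2
  try simp only [Functor.comp_map] at hm
  have : f1.unop = f2.unop := by
    erw [eqToHom_refl, eqToHom_refl, Category.id_comp, Category.comp_id] at hm; exact hm
  simpa using congrArg Quiver.Hom.op this

variable {p}

lemma rlp_pick0op (hp : Ex0 p.op) : FunctorRLP pick0op p := by
  intro F G hsq
  have he : p.obj (F.obj ⟨⟨⟩⟩) = G.obj (Opposite.op 0) := Functor.congr_obj hsq ⟨⟨⟩⟩
  obtain ⟨e', hb, f, hf⟩ := hp (Opposite.op (F.obj ⟨⟨⟩⟩)) (Opposite.op (G.obj (Opposite.op 1)))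
    ((G.map ar2.op ≫ eqToHom he.symm).op)
  refine ⟨(mk₁ f).leftOp, Pt_ext rfl, ?_⟩
  have key : mk₁ f ⋙ p.op = G.rightOp := by
    refine ext₁ (by exact congrArg Opposite.op he) (by exact hb) ?_
    show p.op.map f = _
    rw [hf]
    simp
    rfl
  calc (mk₁ f).leftOp ⋙ p = (mk₁ f ⋙ p.op).leftOp := rfl
    _ = G.rightOp.leftOp := by rw [key]
    _ = G := G.rightOp_leftOp_eq

/-- transfer of lifting problems along op -/
lemma rlp_op {A : Type*} {X : Type*} [Category A] [Category X] (u : A ⥤ X)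
    (h : FunctorRLP u p.op) : FunctorRLP u.op p := by
  intro F G hsq
  have hsq' : F.rightOp ⋙ p.op = u ⋙ G.rightOp := by
    show (F ⋙ p).rightOp = (u.op ⋙ G).rightOp
    rw [hsq]
  obtain ⟨H', hH1, hH2⟩ := h F.rightOp G.rightOp hsq'
  refine ⟨H'.leftOp, ?_, ?_⟩
  · calc u.op ⋙ H'.leftOp = (u ⋙ H').leftOp := rfl
      _ = F.rightOp.leftOp := by rw [hH1]
      _ = F := F.rightOp_leftOp_eq
  · calc H'.leftOp ⋙ p = (H' ⋙ p.op).leftOp := rfl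
      _ = G.rightOp.leftOp := by rw [hH2]
      _ = G := G.rightOp_leftOp_eq

end Elementary

section I2CS1
variable {C : Type*} [Category C]

def hza : (I2.z : I2) ⟶ I2.a := homOfLE (Or.inr rfl)
def hzb : (I2.z : I2) ⟶ I2.b := homOfLE (Or.inr rfl)

lemma I2_le {x y : I2} (u : x ⟶ y) : x = y ∨ x = I2.z := leOfHom u

lemma I2_no_hom {x y : I2} (u : x ⟶ y) (h1 : x = y → False) (h2 : x = I2.z → False) : False :=
  (I2_le u).elim h1 h2

/-- constructor for functors out of I2 -/
def mkI2 {X Y Z : C} (f : X ⟶ Y) (g : X ⟶ Z) : I2 ⥤ C where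
  obj x := match x with | .z => X | .a => Y | .b => Z
  map {x y} u :=
    match x, y, u with
    | .z, .z, _ => 𝟙 X
    | .a, .a, _ => 𝟙 Y
    | .b, .b, _ => 𝟙 Z
    | .z, .a, _ => f
    | .z, .b, _ => g
    | .a, .z, u => (I2_no_hom u (fun h => I2.noConfusion h) (fun h => I2.noConfusion h)).elim
    | .a, .b, u => (I2_no_hom u (fun h => I2.noConfusion h) (fun h => I2.noConfusion h)).elim
    | .b, .z, u => (I2_no_hom u (fun h => I2.noConfusion h) (fun h => I2.noConfusion h)).elim
    | .b, .a, u => (I2_no_hom u (fun h => I2.noConfusion h) (fun h => I2.noConfusion h)).elim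
  map_id x := by cases x <;> rfl
  map_comp {x y z} u v := by
    cases x <;> cases y <;> cases z <;>
      first
        | exact (I2_no_hom u (fun h => I2.noConfusion h) (fun h => I2.noConfusion h)).elim
        | exact (I2_no_hom v (fun h => I2.noConfusion h) (fun h => I2.noConfusion h)).elim
        | simp

/-- extensionality for functors out of I2 -/
lemma I2_ext {F G : I2 ⥤ C} (hz : F.obj .z = G.obj .z) (ha : F.obj .a = G.obj .a)
    (hb : F.obj .b = G.obj .b)
    (wa : F.map hza = eqToHom hz ≫ G.map hza ≫ eqToHom ha.symm)
    (wb : F.map hzb = eqToHom hz ≫ G.map hzb ≫ eqToHom hb.symm) : F = G := by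
  refine CategoryTheory.Functor.ext (fun x => by cases x <;> assumption) ?_
  intro x y u
  cases x <;> cases y <;>
    first
      | exact (I2_no_hom u (fun h => I2.noConfusion h) (fun h => I2.noConfusion h)).elim
      | (obtain rfl : u = 𝟙 _ := Subsingleton.elim _ _; simp)
      | (obtain rfl : u = hza := Subsingleton.elim _ _; exact wa)
      | (obtain rfl : u = hzb := Subsingleton.elim _ _; exact wb)

def CS1.ha : (CS1.x0 : CS1) ⟶ CS1.x1 := CS1.Hom.a
def CS1.hf : (CS1.x1 : CS1) ⟶ CS1.x2 := CS1.Hom.f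
def CS1.hg : (CS1.x1 : CS1) ⟶ CS1.x2 := CS1.Hom.g

lemma CS1.c_eq : (CS1.Hom.c : CS1.x0 ⟶ CS1.x2) = CS1.ha ≫ CS1.hf := rfl

/-- extensionality for functors out of CS1 -/
lemma CS1_ext {F G : CS1 ⥤ C} (h0 : F.obj .x0 = G.obj .x0) (h1 : F.obj .x1 = G.obj .x1)
    (h2 : F.obj .x2 = G.obj .x2)
    (wa : F.map CS1.ha = eqToHom h0 ≫ G.map CS1.ha ≫ eqToHom h1.symm)
    (wf : F.map CS1.hf = eqToHom h1 ≫ G.map CS1.hf ≫ eqToHom h2.symm)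
    (wg : F.map CS1.hg = eqToHom h1 ≫ G.map CS1.hg ≫ eqToHom h2.symm) : F = G := by
  refine CategoryTheory.Functor.ext (fun x => by cases x <;> assumption) ?_
  intro x y u
  change CS1.Hom x y at u
  cases u
  · show F.map (𝟙 _) = _ ≫ G.map (𝟙 _) ≫ _
    simp
  · exact wa
  · show F.map (CS1.ha ≫ CS1.hf) = _ ≫ G.map (CS1.ha ≫ CS1.hf) ≫ _
    rw [Functor.map_comp, Functor.map_comp, wa, wf]
    simp
  · exact wf
  · exact wg

end I2CS1

section Main
open ComposableArrows
variable {E : Type u} {B : Type u'} [Category.{v} E] [Category.{v'} B] {p : E ⥤ B}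

lemma rlp_i2 (hex : Ex0 p) (hun : Un0 p) : FunctorRLP i2Incl p := by
  intro F G hsq
  have hq0 : p.obj (F.obj .z) = G.obj 0 := Functor.congr_obj hsq .z
  have hq1 : p.obj (F.obj .a) = G.obj 1 := Functor.congr_obj hsq .a
  have hq2 : p.obj (F.obj .b) = G.obj 2 := Functor.congr_obj hsq .b
  have hqa : p.map (F.map hza) = eqToHom hq0 ≫ G.map (i2Incl.map hza) ≫ eqToHom hq1.symm :=
    Functor.congr_hom hsq hza
  have hqb : p.map (F.map hzb) = eqToHom hq0 ≫ G.map (i2Incl.map hzb) ≫ eqToHom hq2.symm :=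
    Functor.congr_hom hsq hzb
  obtain ⟨e', hb, f, hf⟩ := hex (F.obj .a) (G.obj 2) (eqToHom hq1 ≫ G.map ar12)
  have hG : G.map (i2Incl.map hzb) = G.map ar01 ≫ G.map ar12 := by
    rw [← G.map_comp]
    rfl
  have hcomp : p.map (F.map hza ≫ f) ≫ eqToHom (hb.trans hq2.symm) = p.map (F.map hzb) := by
    rw [Functor.map_comp, hqa, hqb, hf]
    erw [hG]
    simp
    erw [eqToHom_trans_assoc, eqToHom_refl, Category.id_comp, Category.assoc]
    rfl
  obtain ⟨h', hu⟩ := hun _ _ _ (F.map hza ≫ f) (F.map hzb) (hb.trans hq2.symm) hcomp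
  refine ⟨mk₂ (F.map hza) (f ≫ eqToHom h'), ?_, ?_⟩
  · refine I2_ext rfl rfl rfl
      (by erw [eqToHom_refl, eqToHom_refl, Category.id_comp, Category.comp_id]; rfl) ?_
    show (mk₂ (F.map hza) (f ≫ eqToHom h')).map ar02 = _
    rw [show (ar02 : (0:Fin 3) ⟶ 2) = ar01 ≫ ar12 from rfl, Functor.map_comp]
    show F.map hza ≫ f ≫ eqToHom h' = _
    rw [← Category.assoc, hu]
    simp
    erw [eqToHom_refl, eqToHom_refl, Category.id_comp, Category.comp_id]
  · refine ext₂ hq0 hq1 hq2 hqa ?_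
    show p.map (f ≫ eqToHom h') = _
    rw [Functor.map_comp, eqToHom_map, hf]
    simp
    rfl

lemma rlp_cs1 (hun : Un0 p) : FunctorRLP cs1Incl p := by
  intro F G hsq
  have hq0 : p.obj (F.obj .x0) = G.obj 0 := Functor.congr_obj hsq .x0
  have hq1 : p.obj (F.obj .x1) = G.obj 1 := Functor.congr_obj hsq .x1
  have hq2 : p.obj (F.obj .x2) = G.obj 2 := Functor.congr_obj hsq .x2
  have hqa : p.map (F.map CS1.ha) =
      eqToHom hq0 ≫ G.map (cs1Incl.map CS1.ha) ≫ eqToHom hq1.symm :=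
    Functor.congr_hom hsq CS1.ha
  have hqf : p.map (F.map CS1.hf) =
      eqToHom hq1 ≫ G.map (cs1Incl.map CS1.hf) ≫ eqToHom hq2.symm :=
    Functor.congr_hom hsq CS1.hf
  have hqg : p.map (F.map CS1.hg) =
      eqToHom hq1 ≫ G.map (cs1Incl.map CS1.hg) ≫ eqToHom hq2.symm :=
    Functor.congr_hom hsq CS1.hg
  have huv : p.map (F.map CS1.hf) ≫ eqToHom (rfl : p.obj (F.obj .x2) = p.obj (F.obj .x2)) =
      p.map (F.map CS1.hg) := by
    rw [hqf, hqg]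
    simp
    rfl
  obtain ⟨h', hu⟩ := hun _ _ _ (F.map CS1.hf) (F.map CS1.hg) rfl huv
  have huv' : F.map CS1.hf = F.map CS1.hg := by simpa using hu
  refine ⟨mk₂ (F.map CS1.ha) (F.map CS1.hf), ?_, ?_⟩
  · refine CS1_ext rfl rfl rfl
      (by erw [eqToHom_refl, eqToHom_refl, Category.id_comp, Category.comp_id]; rfl)
      (by erw [eqToHom_refl, eqToHom_refl, Category.id_comp, Category.comp_id]; rfl) ?_
    show (mk₂ (F.map CS1.ha) (F.map CS1.hf)).map ar12 = _
    erw [eqToHom_refl, eqToHom_refl, Category.id_comp, Category.comp_id]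
    exact huv'
  · exact ext₂ hq0 hq1 hq2 hqa hqf

/-- The discreteness-of-fibers condition. -/
def Disc (p : E ⥤ B) : Prop :=
  ∀ (b : B) (e e' : E) (f : e ⟶ e') (he : p.obj e = b) (he' : p.obj e' = b),
    p.map f = eqToHom (he.trans he'.symm) → ∃ h : e = e', f = eqToHom h

lemma disc_of_un0 (hun : Un0 p) : Disc p := by
  intro b e e' f he he' hpf
  obtain ⟨h', hu⟩ := hun e e' e f (𝟙 e) (he'.trans he.symm) (by rw [hpf]; simp)
  refine ⟨h'.symm, ?_⟩
  subst h'
  simpa using hu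

lemma urlp0_of (h0 : FunctorRLP pick0 p) (hI : FunctorRLP i2Incl p) (hd : Disc p) :
    FunctorURLP pick0 p := by
  intro F G hsq
  obtain ⟨H, hH⟩ := h0 F G hsq
  refine ⟨H, hH, ?_⟩
  suffices key : ∀ H1 H2 : Fin 2 ⥤ E,
      (pick0 ⋙ H1 = F ∧ H1 ⋙ p = G) → (pick0 ⋙ H2 = F ∧ H2 ⋙ p = G) → H1 = H2 by
    intro H' hH'
    exact key H' H hH' hH
  rintro H1 H2 ⟨hH1a, hH1b⟩ ⟨hH2a, hH2b⟩
  have h0' : H1.obj 0 = H2.obj 0 :=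
    (Functor.congr_obj hH1a ⟨⟨⟩⟩).trans (Functor.congr_obj hH2a ⟨⟨⟩⟩).symm
  -- set up a lifting problem against i2Incl
  have hsq' : mkI2 (H1.map ar2) (eqToHom h0' ≫ H2.map ar2) ⋙ p =
      i2Incl ⋙ mk₂ (G.map ar2) (𝟙 (G.obj 1)) := by
    refine I2_ext (Functor.congr_obj hH1b 0) (Functor.congr_obj hH1b 1)
      (Functor.congr_obj hH2b 1) ?_ ?_
    · exact Functor.congr_hom hH1b ar2
    · show p.map (eqToHom h0' ≫ H2.map ar2) = eqToHom _ ≫ (G.map ar2 ≫ 𝟙 (G.obj 1)) ≫ eqToHom _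
      have hc := Functor.congr_hom hH2b ar2
      simp only [Functor.comp_map] at hc
      rw [Functor.map_comp, eqToHom_map, hc]
      simp
  obtain ⟨H', hr, hpr⟩ := hI _ _ hsq'
  -- the upper part of the lift lies in a fiber
  have ra : H'.obj 1 = H1.obj 1 := Functor.congr_obj hr .a
  have rb : H'.obj 2 = H2.obj 1 := Functor.congr_obj hr .b
  have rz : H'.obj 0 = H1.obj 0 := Functor.congr_obj hr .z
  have he1 : p.obj (H'.obj 1) = G.obj 1 := Functor.congr_obj hpr 1
  have he2 : p.obj (H'.obj 2) = G.obj 1 := Functor.congr_obj hpr 2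
  obtain ⟨hEq, hv⟩ := hd (G.obj 1) (H'.obj 1) (H'.obj 2) (H'.map ar12) he1 he2
    (by
      have hc := Functor.congr_hom hpr ar12
      simp only [Functor.comp_map] at hc
      rw [hc, show ((mk₂ (G.map ar2) (𝟙 (G.obj 1))).map ar12 : G.obj 1 ⟶ G.obj 1) =
        𝟙 (G.obj 1) from rfl]
      simp
      erw [Category.id_comp, eqToHom_trans])
  -- extract the maps
  have rma : H'.map (i2Incl.map hza) = eqToHom rz ≫ H1.map ar2 ≫ eqToHom ra.symm :=
    Functor.congr_hom hr hza
  have rmb : H'.map (i2Incl.map hzb) =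
      eqToHom rz ≫ (eqToHom h0' ≫ H2.map ar2) ≫ eqToHom rb.symm :=
    Functor.congr_hom hr hzb
  have func : H'.map (i2Incl.map hzb) = H'.map (i2Incl.map hza) ≫ H'.map ar12 := by
    erw [← H'.map_comp]
    rfl
  have m2 : eqToHom rz ≫ (eqToHom h0' ≫ H2.map ar2) ≫ eqToHom rb.symm =
      eqToHom rz ≫ (H1.map ar2 ≫ eqToHom ra.symm) ≫ eqToHom hEq := by
    rw [← rmb, func, rma]
    erw [hv]
    simp
    erw [Category.assoc, Category.assoc, eqToHom_trans]
    rfl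
  have m3 := congrArg (fun q => eqToHom rz.symm ≫ q) m2
  simp only [Category.assoc, eqToHom_trans_assoc, eqToHom_refl, Category.id_comp,
    eqToHom_trans] at m3
  have hobj1 : H1.obj 1 = H2.obj 1 := ra.symm.trans (hEq.trans rb)
  refine ext₁ h0' hobj1 ?_
  have final := congrArg (fun q => q ≫ eqToHom (ra.symm.trans hEq).symm) m3.symm
  simp only [Category.assoc, eqToHom_trans, eqToHom_refl, Category.comp_id] at final
  exact final

lemma urlp1_of (h0 : FunctorRLP pick0op p) (hI : FunctorRLP i2Incl.op p) (hd : Disc p) :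
    FunctorURLP pick1 p := by
  intro F G hsq
  -- existence
  have hobj : p.obj (F.obj ⟨⟨⟩⟩) = G.obj 1 := Functor.congr_obj hsq ⟨⟨⟩⟩
  obtain ⟨H, hr, hpr⟩ := h0 F ((mk₁ ((G.map ar2).op)).leftOp) (Pt_ext hobj)
  have he : H.obj (Opposite.op 0) = F.obj ⟨⟨⟩⟩ := Functor.congr_obj hr ⟨⟨⟩⟩
  have hK2 : mk₁ (H.map (Quiver.Hom.op ar2) ≫ eqToHom he) ⋙ p = G := by
    refine ext₁ (Functor.congr_obj hpr (Opposite.op 1)) hobj ?_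
    have hc := Functor.congr_hom hpr (Quiver.Hom.op ar2)
    simp only [Functor.comp_map] at hc
    show p.map (H.map (Quiver.Hom.op ar2) ≫ eqToHom he) = _
    rw [Functor.map_comp, eqToHom_map, hc,
      show ((mk₁ ((G.map ar2).op)).leftOp.map (Quiver.Hom.op ar2) : G.obj 0 ⟶ G.obj 1) =
        G.map ar2 from rfl]
    simp
    erw [Category.assoc, eqToHom_trans]
    rfl
  refine ⟨mk₁ (H.map (Quiver.Hom.op ar2) ≫ eqToHom he), ⟨Pt_ext rfl, hK2⟩, ?_⟩
  -- uniqueness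
  suffices key : ∀ K1 K2 : Fin 2 ⥤ E,
      (pick1 ⋙ K1 = F ∧ K1 ⋙ p = G) → (pick1 ⋙ K2 = F ∧ K2 ⋙ p = G) → K1 = K2 by
    intro K hK
    exact key K _ hK ⟨Pt_ext rfl, hK2⟩
  rintro K1 K2 ⟨hK1a, hK1b⟩ ⟨hK2a, hK2b⟩
  have h1' : K1.obj 1 = K2.obj 1 :=
    (Functor.congr_obj hK1a ⟨⟨⟩⟩).trans (Functor.congr_obj hK2a ⟨⟨⟩⟩).symm
  have hc1 := Functor.congr_hom hK1b ar2
  have hc2 := Functor.congr_hom hK2b ar2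
  simp only [Functor.comp_map] at hc1 hc2
  have hsq2 : mkI2 ((K1.map ar2).op) ((K2.map ar2 ≫ eqToHom h1'.symm).op) ⋙ p.op =
      i2Incl ⋙ mk₂ ((G.map ar2).op) (𝟙 (Opposite.op (G.obj 0))) := by
    refine I2_ext (congrArg Opposite.op (Functor.congr_obj hK1b 1))
      (congrArg Opposite.op (Functor.congr_obj hK1b 0))
      (congrArg Opposite.op (Functor.congr_obj hK2b 0)) ?_ ?_
    · show (p.map (K1.map ar2)).op = eqToHom _ ≫ (G.map ar2).op ≫ eqToHom _
      rw [hc1]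
      simp
    · show (p.map (K2.map ar2 ≫ eqToHom h1'.symm)).op =
        eqToHom _ ≫ ((G.map ar2).op ≫ 𝟙 (Opposite.op (G.obj 0))) ≫ eqToHom _
      rw [Functor.map_comp, eqToHom_map, hc2]
      simp
  obtain ⟨H', hr', hpr'⟩ := hI
    (mkI2 ((K1.map ar2).op) ((K2.map ar2 ≫ eqToHom h1'.symm).op)).leftOp
    (mk₂ ((G.map ar2).op) (𝟙 (Opposite.op (G.obj 0)))).leftOp
    (by show (mkI2 ((K1.map ar2).op) ((K2.map ar2 ≫ eqToHom h1'.symm).op) ⋙ p.op).leftOp =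
          (i2Incl ⋙ mk₂ ((G.map ar2).op) (𝟙 (Opposite.op (G.obj 0)))).leftOp
        rw [hsq2])
  have rz : H'.obj (Opposite.op 0) = K1.obj 1 := Functor.congr_obj hr' (Opposite.op I2.z)
  have ra : H'.obj (Opposite.op 1) = K1.obj 0 := Functor.congr_obj hr' (Opposite.op I2.a)
  have rb : H'.obj (Opposite.op 2) = K2.obj 0 := Functor.congr_obj hr' (Opposite.op I2.b)
  have he2 : p.obj (H'.obj (Opposite.op 2)) = G.obj 0 := Functor.congr_obj hpr' (Opposite.op 2)
  have he1 : p.obj (H'.obj (Opposite.op 1)) = G.obj 0 := Functor.congr_obj hpr' (Opposite.op 1)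
  have hfib : p.map (H'.map (Quiver.Hom.op ar12)) = eqToHom (he2.trans he1.symm) := by
    have hc := Functor.congr_hom hpr' (Quiver.Hom.op ar12)
    simp only [Functor.comp_map] at hc
    rw [hc, show (Functor.leftOp (mk₂ ((G.map ar2).op) (𝟙 (Opposite.op (G.obj 0))))).map
      (Quiver.Hom.op ar12) = eqToHom (by rfl) from rfl]
    simp
    erw [eqToHom_trans, eqToHom_trans]
  obtain ⟨hEq, hv⟩ := hd (G.obj 0) (H'.obj (Opposite.op 2)) (H'.obj (Opposite.op 1))
    (H'.map (Quiver.Hom.op ar12)) he2 he1 hfib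
  have rm1 : H'.map (Quiver.Hom.op (i2Incl.map hza)) =
      eqToHom ra ≫ K1.map ar2 ≫ eqToHom rz.symm := Functor.congr_hom hr' (Quiver.Hom.op hza)
  have rm2 : H'.map (Quiver.Hom.op (i2Incl.map hzb)) =
      eqToHom rb ≫ (K2.map ar2 ≫ eqToHom h1'.symm) ≫ eqToHom rz.symm :=
    Functor.congr_hom hr' (Quiver.Hom.op hzb)
  have func : H'.map (Quiver.Hom.op (i2Incl.map hzb)) =
      H'.map (Quiver.Hom.op ar12) ≫ H'.map (Quiver.Hom.op (i2Incl.map hza)) := by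
    rw [← H'.map_comp]
    rfl
  have m2 : eqToHom rb ≫ (K2.map ar2 ≫ eqToHom h1'.symm) ≫ eqToHom rz.symm =
      eqToHom hEq ≫ eqToHom ra ≫ K1.map ar2 ≫ eqToHom rz.symm := by
    rw [← rm2, func]
    erw [rm1, hv]
    rfl
  have hobj0 : K1.obj 0 = K2.obj 0 := ra.symm.trans (hEq.symm.trans rb)
  refine ext₁ hobj0 h1' ?_
  have final := congrArg
    (fun q => (eqToHom ra.symm ≫ eqToHom hEq.symm ≫ q) ≫ eqToHom rz) m2
  simp only [Category.assoc, eqToHom_trans, eqToHom_trans_assoc, eqToHom_refl,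
    Category.comp_id, Category.id_comp] at final
  exact final.symm

end Main
end Paper

namespace Paper

/-- **Statement 16.** A functor `p : E ⥤ B` between small categories is a covering iff it is
a fibration of the 1-type model structure (i.e. has the right lifting property with respect
to every member of `J`) and all its fibers `p⁻¹(b)` are discrete categories (the only
morphisms lying over identities are identities). -/
theorem isCovering_iff_fibration_discrete_fibers
    (E : Type u) (B : Type u') [Category.{v} E] [Category.{v'} B] (p : E ⥤ B) :
    IsCovering p ↔
      (Is1Fibration p ∧
        ∀ (b : B) (e e' : E) (f : e ⟶ e') (he : p.obj e = b) (he' : p.obj e' = b),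
          p.map f = eqToHom (he.trans he'.symm) → ∃ h : e = e', f = eqToHom h) := by
  constructor
  · rintro ⟨hp0, hp1⟩
    have ex0 := ex0_of_urlp0 hp0
    have un0 := un0_of_urlp0 hp0
    have ex0' := ex0_op_of_urlp1 p hp1
    have un0' := un0_op_of_urlp1 p hp1
    exact ⟨⟨fun F G h => (hp0 F G h).exists, rlp_pick0op ex0',
      rlp_i2 ex0 un0, rlp_op i2Incl (rlp_i2 ex0' un0'),
      rlp_cs1 un0, rlp_op cs1Incl (rlp_cs1 un0')⟩, disc_of_un0 un0⟩
  · rintro ⟨⟨h1, h2, h3, h4, h5, h6⟩, hd⟩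
    exact ⟨urlp0_of h1 h3 hd, urlp1_of h2 h4 hd⟩


end Paper
end
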